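/- Let u : Ω̄ → ℝ be Lipschitz continuous and semiconcave with modulus ω in Ω̄. Let x ∈ ∂Ω and let ν(x) be the outward unit normal to ∂Ω at x. Then for every direction θ ∈ ℝⁿ with ⟨θ, ν(x)⟩ ≤ 0, the upper and lower Dini derivatives of u at x in direction θ coincide and both equal min_{p ∈ D⁺u(x)} ⟨p, θ⟩; in particular the one-sided directional derivative ∂⁺_θ u(x) exists and equals min_{p ∈ D⁺u(x)} ⟨p, θ⟩. -/

import Mathlib

open MeasureTheory Filter Metric Set Topology
set_option linter.unusedSectionVars false
noncomputable section

/-- Euclidean space `ℝⁿ`. -/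
abbrev E (n : ℕ) := EuclideanSpace ℝ (Fin n)

/-- The oriented boundary distance `b_Ω = d_Ω − d_{Ωᶜ}`. -/
def oriDist {n : ℕ} (Ω : Set (E n)) (x : E n) : ℝ :=
  Metric.infDist x Ω - Metric.infDist x Ωᶜ

/-- `Ω` has `C²` boundary: the oriented boundary distance is `C²` on a tube around `∂Ω`. -/
def HasC2Boundary {n : ℕ} (Ω : Set (E n)) : Prop :=
  ∃ ρ > 0, ContDiffOn ℝ 2 (oriDist Ω) {y | ∃ x ∈ frontier Ω, dist y x < ρ}

/-- The outward unit normal at a boundary point (the gradient of the oriented distance). -/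
def outerNormal {n : ℕ} (Ω : Set (E n)) (x : E n) : E n := gradient (oriDist Ω) x

/-- The (Fréchet) superdifferential of `u` at `x`, relative to the set `S`:
`D⁺u(x) = {p | limsup_{y→x, y∈S} (u(y)−u(x)−⟨p,y−x⟩)/‖y−x‖ ≤ 0}`. -/
def superDiffOn {n : ℕ} (S : Set (E n)) (u : E n → ℝ) (x : E n) : Set (E n) :=
  {p | ∀ ε > 0, ∃ δ > 0, ∀ y ∈ S, ‖y - x‖ < δ →
      u y - u x - (inner ℝ p (y - x) : ℝ) ≤ ε * ‖y - x‖}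

/-- A modulus: a nondecreasing upper semicontinuous function `ω : ℝ₊ → ℝ₊` with
`ω(r) → 0` as `r → 0⁺`. -/
def IsModulus (ω : ℝ → ℝ) : Prop :=
  (∀ r ∈ Set.Ici (0:ℝ), 0 ≤ ω r) ∧ MonotoneOn ω (Set.Ici 0) ∧
    UpperSemicontinuousOn ω (Set.Ici 0) ∧
    Filter.Tendsto ω (nhdsWithin 0 (Set.Ioi 0)) (nhds 0)

/-- `u` is semiconcave on `S` with modulus `ω`:
`λ u(x) + (1−λ) u(y) − u(λx + (1−λ)y) ≤ λ(1−λ)|x−y| ω(|x−y|)` for all `λ ∈ [0,1]`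
and all `x, y ∈ S` whose segment is contained in `S`. -/
def SemiconcaveWith {n : ℕ} (S : Set (E n)) (u : E n → ℝ) (ω : ℝ → ℝ) : Prop :=
  ∀ x ∈ S, ∀ y ∈ S, segment ℝ x y ⊆ S → ∀ l ∈ Set.Icc (0:ℝ) 1,
    l * u x + (1 - l) * u y - u (l • x + (1 - l) • y) ≤
      l * (1 - l) * ‖x - y‖ * ω ‖x - y‖

/-- The filter describing `h → 0⁺`, `θ' → θ` with `x + hθ' ∈ S`, used in the definition of
the Dini derivatives of a function on `S` at `x` in direction `θ`. -/
def diniFilter {n : ℕ} (S : Set (E n)) (x θ : E n) : Filter (ℝ × E n) :=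
  ((nhdsWithin (0:ℝ) (Set.Ioi 0)) ×ˢ nhds θ) ⊓
    Filter.principal {q : ℝ × E n | x + q.1 • q.2 ∈ S}

/-- The difference quotient `(h, θ') ↦ (u(x + hθ') − u(x))/h`. -/
def diffQuot {n : ℕ} (u : E n → ℝ) (x : E n) : ℝ × E n → ℝ :=
  fun q => (u (x + q.1 • q.2) - u x) / q.1


section Aux
variable {n : ℕ} {Ω : Set (E n)}

lemma oriDist_nonpos_of_mem_closure {y : E n} (hy : y ∈ closure Ω) : oriDist Ω y ≤ 0 := by
  have h1 : Metric.infDist y Ω = 0 := by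
    rw [← Metric.infDist_closure]; exact Metric.infDist_zero_of_mem hy
  have h2 : 0 ≤ Metric.infDist y Ωᶜ := Metric.infDist_nonneg
  simp [oriDist, h1]; linarith

lemma mem_of_oriDist_neg {y : E n} (hy : oriDist Ω y < 0) : y ∈ Ω := by
  by_contra hc
  have h2 : Metric.infDist y Ωᶜ = 0 := Metric.infDist_zero_of_mem hc
  have h1 : 0 ≤ Metric.infDist y Ω := Metric.infDist_nonneg
  rw [oriDist, h2] at hy; linarith

lemma mem_closure_of_oriDist_nonpos (hΩne : Ω.Nonempty) {y : E n} (hy : oriDist Ω y ≤ 0) :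
    y ∈ closure Ω := by
  by_contra hc
  have h1 : 0 < Metric.infDist y (closure Ω) :=
    (isClosed_closure.notMem_iff_infDist_pos hΩne.closure).1 hc
  rw [Metric.infDist_closure] at h1
  have hyc : y ∈ Ωᶜ := fun hyo => hc (subset_closure hyo)
  have h2 : Metric.infDist y Ωᶜ = 0 := Metric.infDist_zero_of_mem hyc
  rw [oriDist, h2] at hy; linarith

lemma oriDist_frontier_eq_zero (hΩo : IsOpen Ω) {x : E n} (hx : x ∈ frontier Ω) :
    oriDist Ω x = 0 := by
  have hxc : x ∈ closure Ω := hx.1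
  have hxn : x ∉ Ω := fun h => hx.2 (by rw [hΩo.interior_eq]; exact h)
  have h1 : Metric.infDist x Ω = 0 := by
    rw [← Metric.infDist_closure]; exact Metric.infDist_zero_of_mem hxc
  have h2 : Metric.infDist x Ωᶜ = 0 := Metric.infDist_zero_of_mem hxn
  simp [oriDist, h1, h2]

def tube (Ω : Set (E n)) (ρ : ℝ) : Set (E n) := {y | ∃ x ∈ frontier Ω, dist y x < ρ}

lemma tube_isOpen (ρ : ℝ) : IsOpen (tube Ω ρ) := by
  have : tube Ω ρ = ⋃ x ∈ frontier Ω, Metric.ball x ρ := by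
    ext y; simp [tube, Metric.mem_ball]
  rw [this]
  exact isOpen_biUnion fun _ _ => Metric.isOpen_ball

lemma mem_tube {x : E n} (hx : x ∈ frontier Ω) {ρ : ℝ} (hρ : 0 < ρ) : x ∈ tube Ω ρ :=
  ⟨x, hx, by simpa using hρ⟩

variable (hΩo : IsOpen Ω) {ρ : ℝ} (hρ : 0 < ρ) (hb2 : ContDiffOn ℝ 2 (oriDist Ω) (tube Ω ρ))
  {x : E n} (hx : x ∈ frontier Ω)

include hρ hb2 hx

lemma hasGradientAt_oriDist : HasGradientAt (oriDist Ω) (outerNormal Ω x) x := by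
  have h : DifferentiableAt ℝ (oriDist Ω) x := by
    have := (hb2.contDiffAt ((tube_isOpen ρ).mem_nhds (mem_tube hx hρ)))
    exact this.differentiableAt (by norm_num)
  exact h.hasGradientAt

include hΩo in
lemma oriDist_approx : ∀ ε > (0:ℝ), ∃ δ > (0:ℝ), ∀ v : E n, ‖v‖ < δ →
    |oriDist Ω (x + v) - (inner ℝ (outerNormal Ω x) v : ℝ)| ≤ ε * ‖v‖ := by
  intro ε hε
  have hg := hasGradientAt_oriDist hρ hb2 hx
  have h1 : HasFDerivAt (oriDist Ω) (InnerProductSpace.toDual ℝ (E n) (outerNormal Ω x)) x :=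
    hg.hasFDerivAt
  rw [hasFDerivAt_iff_isLittleO_nhds_zero] at h1
  have h2 := (Asymptotics.isLittleO_iff.1 h1) hε
  rcases Metric.eventually_nhds_iff_ball.1 h2 with ⟨δ, hδ, hb⟩
  refine ⟨δ, hδ, fun v hv => ?_⟩
  have h3 := hb v (by simpa [Metric.mem_ball, dist_eq_norm] using hv)
  have hx0 : oriDist Ω x = 0 := oriDist_frontier_eq_zero hΩo hx
  simpa [InnerProductSpace.toDual_apply_apply, Real.norm_eq_abs, hx0] using h3

end Aux

section Aux2
variable {n : ℕ} {Ω : Set (E n)} (hΩo : IsOpen Ω)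
  {ρ : ℝ} (hρ : 0 < ρ) (hb2 : ContDiffOn ℝ 2 (oriDist Ω) (tube Ω ρ))
  {x : E n} (hx : x ∈ frontier Ω)
include hΩo hρ hb2 hx

lemma norm_outerNormal_ge_one : 1 ≤ ‖outerNormal Ω x‖ := by
  set b := oriDist Ω with hbdef
  set c := ‖outerNormal Ω x‖ with hcdef
  have hxn : x ∉ Ω := fun h => hx.2 (by rw [hΩo.interior_eq]; exact h)
  have key : ∀ ε > (0:ℝ), 1 ≤ c + ε := by
    intro ε hε
    -- continuity of fderiv near x
    have hcont : ContinuousOn (fderiv ℝ b) (tube Ω ρ) :=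
      hb2.continuousOn_fderiv_of_isOpen (tube_isOpen ρ) (by norm_num)
    have hmem : tube Ω ρ ∈ 𝓝 x := (tube_isOpen ρ).mem_nhds (mem_tube hx hρ)
    have hca : ContinuousAt (fderiv ℝ b) x := hcont.continuousAt hmem
    have hfx : fderiv ℝ b x = InnerProductSpace.toDual ℝ (E n) (outerNormal Ω x) :=
      (hasGradientAt_oriDist hρ hb2 hx).hasFDerivAt.fderiv
    have hnx : ‖fderiv ℝ b x‖ = c := by
      rw [hfx]
      exact (InnerProductSpace.toDual ℝ (E n)).norm_map (outerNormal Ω x)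
    have hev : ∀ᶠ z in 𝓝 x, ‖fderiv ℝ b z‖ < c + ε := by
      have h1 : Filter.Tendsto (fun z => ‖fderiv ℝ b z‖) (𝓝 x) (𝓝 c) := by
        rw [← hnx]; exact hca.norm
      exact h1.eventually_lt_const (by linarith)
    obtain ⟨r, hr, hball⟩ := Metric.eventually_nhds_iff_ball.1 (hev.and ((tube_isOpen (Ω := Ω) ρ).eventually_mem (mem_tube hx hρ)))
    -- pick y ∈ Ω close to x
    obtain ⟨y, hyΩ, hyx⟩ : ∃ y ∈ Ω, dist x y < r/4 := by
      have := Metric.mem_closure_iff.1 hx.1 (r/4) (by linarith)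
      exact this
    set d := Metric.infDist y Ωᶜ with hddef
    have hΩc : IsClosed (Ωᶜ : Set (E n)) := hΩo.isClosed_compl
    have hd0 : 0 < d := (hΩc.notMem_iff_infDist_pos ⟨x, hxn⟩ (x := y)).1 (by simp [hyΩ])
    have hdle : d ≤ dist y x := Metric.infDist_le_dist_of_mem hxn
    obtain ⟨z, hzc, hzd⟩ := hΩc.exists_infDist_eq_dist ⟨x, hxn⟩ y
    have hyb : y ∈ Metric.ball x r := by
      rw [Metric.mem_ball, dist_comm]; linarith
    have hzb : z ∈ Metric.ball x r := by
      rw [Metric.mem_ball]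
      have : dist z x ≤ dist z y + dist y x := dist_triangle z y x
      rw [dist_comm z y, ← hzd] at this
      rw [dist_comm x y] at hyx
      linarith
    -- values of b
    have hby : b y = -d := by
      have h1 : Metric.infDist y Ω = 0 := by
        rw [← Metric.infDist_closure]; exact Metric.infDist_zero_of_mem (subset_closure hyΩ)
      simp [hbdef, oriDist, h1, hddef]
    have hbz : 0 ≤ b z := by
      have h2 : Metric.infDist z Ωᶜ = 0 := Metric.infDist_zero_of_mem hzc
      have : 0 ≤ Metric.infDist z Ω := Metric.infDist_nonneg
      simp [hbdef, oriDist, h2]; linarith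
    -- MVT
    have hdiff : ∀ w ∈ Metric.ball x r, DifferentiableAt ℝ b w := fun w hw =>
      (hb2.contDiffAt ((tube_isOpen ρ).mem_nhds (hball w hw).2)).differentiableAt (by norm_num)
    have hbound : ∀ w ∈ Metric.ball x r, ‖fderiv ℝ b w‖ ≤ c + ε := fun w hw =>
      le_of_lt (hball w hw).1
    have hmvt := (convex_ball x r).norm_image_sub_le_of_norm_fderiv_le hdiff hbound hyb hzb
    have hzy : ‖z - y‖ = d := by rw [← dist_eq_norm, dist_comm, hddef, hzd]
    rw [hzy] at hmvt
    have : d ≤ (c + ε) * d := by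
      have h3 : d ≤ b z - b y := by rw [hby]; linarith
      have h4 : b z - b y ≤ ‖b z - b y‖ := le_abs_self _
      linarith
    have hc0 : 0 ≤ c := norm_nonneg _
    nlinarith
  exact le_of_forall_pos_le_add key

lemma inward_mem : ∀ a > (0:ℝ), ∃ δ > (0:ℝ), ∀ v : E n, ‖v‖ < δ →
    (inner ℝ (outerNormal Ω x) v : ℝ) ≤ -a * ‖v‖ → v ≠ 0 → x + v ∈ Ω := by
  intro a ha
  obtain ⟨δ, hδ, happ⟩ := oriDist_approx hΩo hρ hb2 hx (a/2) (by linarith)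
  refine ⟨δ, hδ, fun v hv hin hv0 => ?_⟩
  apply mem_of_oriDist_neg
  have h1 := happ v hv
  have h2 : oriDist Ω (x + v) ≤ (inner ℝ (outerNormal Ω x) v : ℝ) + (a/2) * ‖v‖ := by
    have := abs_le.1 h1; linarith [this.2]
  have hvpos : 0 < ‖v‖ := norm_pos_iff.2 hv0
  nlinarith

lemma inward_segment_mem : ∀ a > (0:ℝ), ∃ δ > (0:ℝ), ∀ v : E n, ‖v‖ < δ →
    (inner ℝ (outerNormal Ω x) v : ℝ) ≤ -a * ‖v‖ → ∀ t ∈ Set.Icc (0:ℝ) 1,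
    x + t • v ∈ closure Ω := by
  intro a ha
  obtain ⟨δ, hδ, hinw⟩ := inward_mem hΩo hρ hb2 hx a ha
  refine ⟨δ, hδ, fun v hv hin t ht => ?_⟩
  rcases eq_or_lt_of_le ht.1 with h0 | h0
  · simp [← h0]; exact hx.1
  · rcases eq_or_ne v 0 with rfl | hv0
    · simp; exact hx.1
    · apply subset_closure
      apply hinw (t • v)
      · rw [norm_smul, Real.norm_eq_abs, abs_of_pos h0]
        calc t * ‖v‖ ≤ 1 * ‖v‖ := by
              apply mul_le_mul_of_nonneg_right ht.2 (norm_nonneg v)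
          _ = ‖v‖ := one_mul _
          _ < δ := hv
      · rw [real_inner_smul_right, norm_smul, Real.norm_eq_abs, abs_of_pos h0]
        calc t * (inner ℝ (outerNormal Ω x) v : ℝ) ≤ t * (-a * ‖v‖) :=
              mul_le_mul_of_nonneg_left hin (le_of_lt h0)
          _ = -a * (t * ‖v‖) := by ring
      · simp [smul_eq_zero, hv0]
        intro h; exact absurd h (ne_of_gt h0)
  
end Aux2
def qfun {n : ℕ} (u : E n → ℝ) (x : E n) (h : ℝ) (w : E n) : ℝ := (u (x + h • w) - u x) / h

def phiFun {n : ℕ} (u : E n → ℝ) (x : E n) (w : E n) : ℝ :=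
  Filter.liminf (fun h => qfun u x h w) (nhdsWithin (0:ℝ) (Set.Ioi 0))

lemma mul_left_tendsto_nhdsWithin_Ioi {t : ℝ} (ht : 0 < t) :
    Filter.Tendsto (fun h : ℝ => t * h) (𝓝[>] (0:ℝ)) (𝓝[>] (0:ℝ)) := by
  apply tendsto_nhdsWithin_of_tendsto_nhds_of_eventually_within
  · have h1 : Filter.Tendsto (fun h : ℝ => t * h) (𝓝 0) (𝓝 (t * 0)) :=
      (continuous_const.mul continuous_id).tendsto 0
    rw [mul_zero] at h1
    exact h1.mono_left nhdsWithin_le_nhds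
  · filter_upwards [self_mem_nhdsWithin] with h hh
    exact mul_pos ht hh

section Aux3
variable {n : ℕ} {Ω : Set (E n)} (hΩo : IsOpen Ω)
  {u : E n → ℝ} {K : ℝ} (hK0 : 0 ≤ K)
  (hK : ∀ y ∈ closure Ω, ∀ z ∈ closure Ω, |u y - u z| ≤ K * ‖y - z‖)
  {ω : ℝ → ℝ} (hω : IsModulus ω) (hu : SemiconcaveWith (closure Ω) u ω)
  {ρ : ℝ} (hρ : 0 < ρ) (hb2 : ContDiffOn ℝ 2 (oriDist Ω) (tube Ω ρ))
  {x : E n} (hx : x ∈ frontier Ω)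

include hx hK in
lemma qfun_abs_le {h : ℝ} (hh : 0 < h) {w : E n} (hmem : x + h • w ∈ closure Ω) :
    |qfun u x h w| ≤ K * ‖w‖ := by
  have h1 := hK _ hmem _ hx.1
  have h2 : ‖(x + h • w) - x‖ = h * ‖w‖ := by
    simp [norm_smul, abs_of_pos hh]
  rw [h2] at h1
  rw [qfun, abs_div, abs_of_pos hh, div_le_iff₀ hh]
  calc |u (x + h • w) - u x| ≤ K * (h * ‖w‖) := h1
    _ = K * ‖w‖ * h := by ring

include hK in
lemma qfun_sub_abs_le {h : ℝ} (hh : 0 < h) {w w' : E n} (hm1 : x + h • w ∈ closure Ω)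
    (hm2 : x + h • w' ∈ closure Ω) :
    |qfun u x h w - qfun u x h w'| ≤ K * ‖w - w'‖ := by
  have h1 := hK _ hm1 _ hm2
  have h2 : ‖(x + h • w) - (x + h • w')‖ = h * ‖w - w'‖ := by
    have : (x + h • w) - (x + h • w') = h • (w - w') := by module
    rw [this, norm_smul, Real.norm_eq_abs, abs_of_pos hh]
  rw [h2] at h1
  have h3 : qfun u x h w - qfun u x h w' = (u (x + h • w) - u (x + h • w')) / h := by
    rw [qfun, qfun]; field_simp; ring
  rw [h3, abs_div, abs_of_pos hh, div_le_iff₀ hh]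
  calc |u (x + h • w) - u (x + h • w')| ≤ K * (h * ‖w - w'‖) := h1
    _ = K * ‖w - w'‖ * h := by ring

include hx hω hu in
lemma qfun_mono {h1 h2 : ℝ} (hh1 : 0 < h1) (h12 : h1 ≤ h2) {w : E n}
    (hseg : ∀ t ∈ Set.Icc (0:ℝ) 1, x + (t * h2) • w ∈ closure Ω) :
    qfun u x h2 w - ‖w‖ * ω (h2 * ‖w‖) ≤ qfun u x h1 w := by
  have hh2 : 0 < h2 := lt_of_lt_of_le hh1 h12
  set l := h1 / h2 with hldef
  have hl0 : 0 < l := div_pos hh1 hh2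
  have hl1 : l ≤ 1 := (div_le_one hh2).2 h12
  have hlh : l * h2 = h1 := div_mul_cancel₀ h1 (ne_of_gt hh2)
  have hX : x + h2 • w ∈ closure Ω := by
    have := hseg 1 ⟨zero_le_one, le_refl 1⟩; simpa using this
  have hx1 : x ∈ closure Ω := hx.1
  have hsegsub : segment ℝ (x + h2 • w) x ⊆ closure Ω := by
    rw [segment_eq_image']
    rintro z ⟨t, ht, rfl⟩
    have he : x + h2 • w + t • (x - (x + h2 • w)) = x + ((1 - t) * h2) • w := by module
    show x + h2 • w + t • (x - (x + h2 • w)) ∈ closure Ω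
    rw [he]
    exact hseg (1 - t) ⟨by linarith [ht.2], by linarith [ht.1]⟩
  have key := hu _ hX _ hx1 hsegsub l ⟨le_of_lt hl0, hl1⟩
  have hcomb : l • (x + h2 • w) + (1 - l) • x = x + h1 • w := by rw [← hlh]; module
  have hnorm : ‖(x + h2 • w) - x‖ = h2 * ‖w‖ := by simp [norm_smul, abs_of_pos hh2]
  rw [hcomb, hnorm] at key
  have hω0 : 0 ≤ ω (h2 * ‖w‖) := hω.1 _ (mul_nonneg (le_of_lt hh2) (norm_nonneg w))
  set A := u (x + h2 • w) - u x with hA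
  set B := u (x + h1 • w) - u x with hB
  have key' : l * A - B ≤ l * (1 - l) * (h2 * ‖w‖) * ω (h2 * ‖w‖) := by
    have e : l * A - B = l * u (x + h2 • w) + (1 - l) * u x - u (x + h1 • w) := by
      rw [hA, hB]; ring
    rw [e]; exact key
  have goal2 : l * A - h1 * (‖w‖ * ω (h2 * ‖w‖)) ≤ B := by
    have h5 : l * (1 - l) * (h2 * ‖w‖) * ω (h2 * ‖w‖)
        = (1 - l) * (h1 * (‖w‖ * ω (h2 * ‖w‖))) := by rw [← hlh]; ring
    have h6 : 0 ≤ h1 * (‖w‖ * ω (h2 * ‖w‖)) :=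
      mul_nonneg (le_of_lt hh1) (mul_nonneg (norm_nonneg w) hω0)
    have h7 := mul_le_of_le_one_left h6 (by linarith : (1:ℝ) - l ≤ 1)
    rw [h5] at key'
    linarith
  have e1 : qfun u x h2 w - ‖w‖ * ω (h2 * ‖w‖)
      = (l * A - h1 * (‖w‖ * ω (h2 * ‖w‖))) / h1 := by
    rw [qfun, ← hA, ← hlh]
    field_simp
  rw [e1, qfun, ← hB]
  gcongr
end Aux3

variable {n : ℕ} {Ω : Set (E n)} (hΩo : IsOpen Ω)
  {u : E n → ℝ} {K : ℝ}
  (hK : ∀ y ∈ closure Ω, ∀ z ∈ closure Ω, |u y - u z| ≤ K * ‖y - z‖)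
  {ω : ℝ → ℝ} (hω : IsModulus ω) (hu : SemiconcaveWith (closure Ω) u ω)
  {ρ : ℝ} (hρ : 0 < ρ) (hb2 : ContDiffOn ℝ 2 (oriDist Ω) (tube Ω ρ))
  {x : E n} (hx : x ∈ frontier Ω)

lemma mul_right_tendsto_nhdsWithin_Ioi {t : ℝ} (ht : 0 < t) :
    Filter.Tendsto (fun h : ℝ => h * t) (𝓝[>] (0:ℝ)) (𝓝[>] (0:ℝ)) := by
  have := mul_left_tendsto_nhdsWithin_Ioi ht
  apply this.congr
  intro h; ring

include hΩo hρ hb2 hx in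
lemma seg_ev {w : E n} {a : ℝ} (ha : 0 < a)
    (hw : (inner ℝ (outerNormal Ω x) w : ℝ) ≤ -a * ‖w‖) (hw0 : w ≠ 0) :
    ∃ h₀ > (0:ℝ), ∀ h ∈ Set.Ioo (0:ℝ) h₀, ∀ t ∈ Set.Icc (0:ℝ) 1,
      x + (t * h) • w ∈ closure Ω := by
  obtain ⟨δ, hδ, hinw⟩ := inward_segment_mem hΩo hρ hb2 hx a ha
  have hwn : 0 < ‖w‖ := norm_pos_iff.2 hw0
  refine ⟨δ / ‖w‖, div_pos hδ hwn, fun h hh t ht => ?_⟩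
  have hnv : ‖h • w‖ < δ := by
    rw [norm_smul, Real.norm_eq_abs, abs_of_pos hh.1]
    exact (lt_div_iff₀ hwn).1 hh.2
  have hiv : (inner ℝ (outerNormal Ω x) (h • w) : ℝ) ≤ -a * ‖h • w‖ := by
    rw [real_inner_smul_right, norm_smul, Real.norm_eq_abs, abs_of_pos hh.1]
    calc h * (inner ℝ (outerNormal Ω x) w : ℝ) ≤ h * (-a * ‖w‖) :=
          mul_le_mul_of_nonneg_left hw (le_of_lt hh.1)
      _ = -a * (h * ‖w‖) := by ring
  have := hinw (h • w) hnv hiv t ht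
  rwa [smul_smul] at this

include hΩo hK hω hu hρ hb2 hx in
lemma qfun_le_phi {h : ℝ} (hh : 0 < h) {w : E n}
    (hseg : ∀ t ∈ Set.Icc (0:ℝ) 1, x + (t * h) • w ∈ closure Ω) :
    qfun u x h w ≤ phiFun u x w + ‖w‖ * ω (h * ‖w‖) := by
  have hev : ∀ᶠ h1 in 𝓝[>] (0:ℝ), qfun u x h w - ‖w‖ * ω (h * ‖w‖) ≤ qfun u x h1 w := by
    filter_upwards [Ioo_mem_nhdsGT_of_mem ⟨le_refl (0:ℝ), hh⟩] with h1 hh1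
    exact qfun_mono hω hu hx hh1.1 (le_of_lt hh1.2) hseg
  have hub : ∀ᶠ h1 in 𝓝[>] (0:ℝ), qfun u x h1 w ≤ K * ‖w‖ := by
    filter_upwards [Ioo_mem_nhdsGT_of_mem ⟨le_refl (0:ℝ), hh⟩] with h1 hh1
    have hm : x + h1 • w ∈ closure Ω := by
      have := hseg (h1 / h) ⟨le_of_lt (div_pos hh1.1 hh), (div_le_one hh).2 (le_of_lt hh1.2)⟩
      rwa [div_mul_cancel₀ h1 (ne_of_gt hh)] at this
    exact (abs_le.1 (qfun_abs_le hK hx hh1.1 hm)).2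
  have hcob : Filter.IsCoboundedUnder (· ≥ ·) (𝓝[>] (0:ℝ)) (fun h1 => qfun u x h1 w) :=
    Filter.isCoboundedUnder_ge_of_eventually_le _ hub
  have := Filter.le_liminf_of_le hcob hev
  have hphi : Filter.liminf (fun h1 => qfun u x h1 w) (𝓝[>] (0:ℝ)) = phiFun u x w := rfl
  rw [hphi] at this
  linarith

include hΩo hK hω hu hρ hb2 hx in
lemma phi_tendsto {w : E n} {a : ℝ} (ha : 0 < a)
    (hw : (inner ℝ (outerNormal Ω x) w : ℝ) ≤ -a * ‖w‖) (hw0 : w ≠ 0) :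
    Filter.Tendsto (fun h => qfun u x h w) (𝓝[>] (0:ℝ)) (𝓝 (phiFun u x w)) := by
  obtain ⟨h₀, hh₀, hseg⟩ := seg_ev hΩo hρ hb2 hx ha hw hw0
  have hwn : 0 < ‖w‖ := norm_pos_iff.2 hw0
  have hmemev : ∀ᶠ h in 𝓝[>] (0:ℝ), x + h • w ∈ closure Ω := by
    filter_upwards [Ioo_mem_nhdsGT_of_mem ⟨le_refl (0:ℝ), hh₀⟩] with h hh
    have := hseg h hh 1 ⟨zero_le_one, le_refl 1⟩
    simpa using this
  have hub : ∀ᶠ h in 𝓝[>] (0:ℝ), qfun u x h w ≤ phiFun u x w + ‖w‖ * ω (h * ‖w‖) := by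
    filter_upwards [Ioo_mem_nhdsGT_of_mem ⟨le_refl (0:ℝ), hh₀⟩] with h hh
    exact qfun_le_phi hΩo hK hω hu hρ hb2 hx hh.1 (hseg h hh)
  have hωt : Filter.Tendsto (fun h => ω (h * ‖w‖)) (𝓝[>] (0:ℝ)) (𝓝 0) :=
    (hω.2.2.2).comp (mul_right_tendsto_nhdsWithin_Ioi hwn)
  rw [Metric.tendsto_nhds]
  intro ε hε
  have hup2 : ∀ᶠ h in 𝓝[>] (0:ℝ), ‖w‖ * ω (h * ‖w‖) < ε/2 := by
    have h' := hωt.const_mul ‖w‖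
    rw [mul_zero] at h'
    exact h'.eventually_lt_const (by linarith)
  have hbdd : Filter.IsBoundedUnder (· ≥ ·) (𝓝[>] (0:ℝ)) (fun h => qfun u x h w) := by
    refine ⟨-(K * ‖w‖), ?_⟩
    rw [Filter.eventually_map]
    filter_upwards [hmemev, self_mem_nhdsWithin] with h h1 h2
    have := (abs_le.1 (qfun_abs_le hK hx h2 h1)).1
    linarith
  have hlow : ∀ᶠ h in 𝓝[>] (0:ℝ), phiFun u x w - ε/2 < qfun u x h w := by
    apply Filter.eventually_lt_of_lt_liminf _ hbdd
    exact sub_lt_self _ (by linarith)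
  filter_upwards [hub, hup2, hlow] with h h1 h2 h3
  rw [Real.dist_eq, abs_lt]
  constructor
  · linarith
  · linarith

include hΩo hK hω hu hρ hb2 hx in
lemma phi_abs_le {w : E n} {a : ℝ} (ha : 0 < a)
    (hw : (inner ℝ (outerNormal Ω x) w : ℝ) ≤ -a * ‖w‖) (hw0 : w ≠ 0) :
    |phiFun u x w| ≤ K * ‖w‖ := by
  obtain ⟨h₀, hh₀, hseg⟩ := seg_ev hΩo hρ hb2 hx ha hw hw0
  have T := phi_tendsto hΩo hK hω hu hρ hb2 hx ha hw hw0
  refine le_of_tendsto T.abs ?_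
  filter_upwards [Ioo_mem_nhdsGT_of_mem ⟨le_refl (0:ℝ), hh₀⟩] with h hh
  have hm : x + h • w ∈ closure Ω := by
    have := hseg h hh 1 ⟨zero_le_one, le_refl 1⟩; simpa using this
  exact qfun_abs_le hK hx hh.1 hm

include hΩo hK hω hu hρ hb2 hx in
lemma phi_sub_abs_le {w w' : E n} {a a' : ℝ} (ha : 0 < a)
    (hw : (inner ℝ (outerNormal Ω x) w : ℝ) ≤ -a * ‖w‖) (hw0 : w ≠ 0) (ha' : 0 < a')
    (hw' : (inner ℝ (outerNormal Ω x) w' : ℝ) ≤ -a' * ‖w'‖) (hw0' : w' ≠ 0) :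
    |phiFun u x w - phiFun u x w'| ≤ K * ‖w - w'‖ := by
  obtain ⟨h₀, hh₀, hseg⟩ := seg_ev hΩo hρ hb2 hx ha hw hw0
  obtain ⟨h₀', hh₀', hseg'⟩ := seg_ev hΩo hρ hb2 hx ha' hw' hw0'
  have T := phi_tendsto hΩo hK hω hu hρ hb2 hx ha hw hw0
  have T' := phi_tendsto hΩo hK hω hu hρ hb2 hx ha' hw' hw0'
  refine le_of_tendsto (T.sub T').abs ?_
  filter_upwards [Ioo_mem_nhdsGT_of_mem ⟨le_refl (0:ℝ), lt_min hh₀ hh₀'⟩] with h hh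
  have hm : x + h • w ∈ closure Ω := by
    have := hseg h ⟨hh.1, lt_of_lt_of_le hh.2 (min_le_left _ _)⟩ 1 ⟨zero_le_one, le_refl 1⟩
    simpa using this
  have hm' : x + h • w' ∈ closure Ω := by
    have := hseg' h ⟨hh.1, lt_of_lt_of_le hh.2 (min_le_right _ _)⟩ 1 ⟨zero_le_one, le_refl 1⟩
    simpa using this
  exact qfun_sub_abs_le hK hh.1 hm hm'

include hΩo hK hω hu hρ hb2 hx in
lemma phi_smul {t : ℝ} (ht : 0 < t) {w : E n} {a : ℝ} (ha : 0 < a)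
    (hw : (inner ℝ (outerNormal Ω x) w : ℝ) ≤ -a * ‖w‖) (hw0 : w ≠ 0) :
    phiFun u x (t • w) = t * phiFun u x w := by
  have T := phi_tendsto hΩo hK hω hu hρ hb2 hx ha hw hw0
  have hcomp : Filter.Tendsto (fun h => qfun u x h (t • w)) (𝓝[>] (0:ℝ))
      (𝓝 (t * phiFun u x w)) := by
    have base : Filter.Tendsto (fun h : ℝ => qfun u x (t * h) w) (𝓝[>] (0:ℝ))
        (𝓝 (phiFun u x w)) := T.comp (mul_left_tendsto_nhdsWithin_Ioi ht)
    have base2 := base.const_mul t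
    apply base2.congr'
    filter_upwards [self_mem_nhdsWithin] with h hh
    have hsm : h • (t • w) = (t * h) • w := by rw [smul_smul, mul_comm]
    rw [qfun, qfun, hsm]
    have hh' : (h:ℝ) ≠ 0 := ne_of_gt hh
    field_simp
  exact hcomp.liminf_eq

include hΩo hK hω hu hρ hb2 hx in
lemma phi_concave {w1 w2 : E n} {a1 a2 : ℝ} (ha1 : 0 < a1) (ha2 : 0 < a2)
    (hw1 : (inner ℝ (outerNormal Ω x) w1 : ℝ) ≤ -a1 * ‖w1‖) (h10 : w1 ≠ 0)
    (hw2 : (inner ℝ (outerNormal Ω x) w2 : ℝ) ≤ -a2 * ‖w2‖) (h20 : w2 ≠ 0)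
    {l : ℝ} (hl : l ∈ Set.Icc (0:ℝ) 1) :
    l * phiFun u x w1 + (1 - l) * phiFun u x w2 ≤ phiFun u x (l • w1 + (1 - l) • w2) := by
  rcases eq_or_lt_of_le hl.1 with h0 | h0
  · rw [← h0]; simp
  rcases (lt_or_eq_of_le hl.2) with h1 | h1
  swap
  · rw [h1]; simp
  -- 0 < l < 1
  set ν := outerNormal Ω x with hν
  have hn1 : 0 < ‖w1‖ := norm_pos_iff.2 h10
  have hn2 : 0 < ‖w2‖ := norm_pos_iff.2 h20
  set m := min (a1 * ‖w1‖) (a2 * ‖w2‖) with hm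
  have hm0 : 0 < m := lt_min (mul_pos ha1 hn1) (mul_pos ha2 hn2)
  set M := ‖w1‖ + ‖w2‖ with hM
  have hM0 : 0 < M := by positivity
  have hwt : ∀ t ∈ Set.Icc (0:ℝ) 1,
      (inner ℝ ν (t • w1 + (1 - t) • w2) : ℝ) ≤ -m ∧ ‖t • w1 + (1 - t) • w2‖ ≤ M := by
    intro t ht
    constructor
    · rw [inner_add_right, real_inner_smul_right, real_inner_smul_right]
      have e1 : t * (inner ℝ ν w1 : ℝ) ≤ t * (-a1 * ‖w1‖) :=
        mul_le_mul_of_nonneg_left hw1 ht.1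
      have e2 : (1 - t) * (inner ℝ ν w2 : ℝ) ≤ (1 - t) * (-a2 * ‖w2‖) :=
        mul_le_mul_of_nonneg_left hw2 (by linarith [ht.2])
      have e3 : m ≤ a1 * ‖w1‖ := min_le_left _ _
      have e4 : m ≤ a2 * ‖w2‖ := min_le_right _ _
      nlinarith [ht.1, ht.2]
    · calc ‖t • w1 + (1 - t) • w2‖ ≤ ‖t • w1‖ + ‖(1 - t) • w2‖ := norm_add_le _ _
        _ = t * ‖w1‖ + (1 - t) * ‖w2‖ := by
            rw [norm_smul, norm_smul, Real.norm_eq_abs, Real.norm_eq_abs,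
              abs_of_nonneg ht.1, abs_of_nonneg (by linarith [ht.2] : (0:ℝ) ≤ 1 - t)]
        _ ≤ M := by
            have := mul_le_of_le_one_left (le_of_lt hn1) ht.2
            have := mul_le_of_le_one_left (le_of_lt hn2) (by linarith [ht.1] : 1 - t ≤ 1)
            rw [hM]; linarith
  have hstrict : ∀ t ∈ Set.Icc (0:ℝ) 1,
      (inner ℝ ν (t • w1 + (1 - t) • w2) : ℝ) ≤ -(m / M) * ‖t • w1 + (1 - t) • w2‖ ∧
        t • w1 + (1 - t) • w2 ≠ 0 := by
    intro t ht
    obtain ⟨hi, hnle⟩ := hwt t ht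
    have hkey : (m / M) * ‖t • w1 + (1 - t) • w2‖ ≤ m := by
      calc (m / M) * ‖t • w1 + (1 - t) • w2‖ ≤ (m / M) * M :=
            mul_le_mul_of_nonneg_left hnle (le_of_lt (div_pos hm0 hM0))
        _ = m := div_mul_cancel₀ m (ne_of_gt hM0)
    refine ⟨by linarith, fun hz => ?_⟩
    rw [hz, inner_zero_right] at hi
    linarith
  obtain ⟨δ, hδ, hinw⟩ := inward_segment_mem hΩo hρ hb2 hx (m / M) (div_pos hm0 hM0)
  have hsegmem : ∀ h ∈ Set.Ioo (0:ℝ) (δ / M), ∀ t ∈ Set.Icc (0:ℝ) 1,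
      x + h • (t • w1 + (1 - t) • w2) ∈ closure Ω := by
    intro h hh t ht
    obtain ⟨hi, hnle⟩ := hwt t ht
    have hnv : ‖h • (t • w1 + (1 - t) • w2)‖ < δ := by
      rw [norm_smul, Real.norm_eq_abs, abs_of_pos hh.1]
      calc h * ‖t • w1 + (1 - t) • w2‖ ≤ h * M :=
            mul_le_mul_of_nonneg_left hnle (le_of_lt hh.1)
        _ < δ := (lt_div_iff₀ hM0).1 hh.2
    have hiv : (inner ℝ ν (h • (t • w1 + (1 - t) • w2)) : ℝ)
        ≤ -(m / M) * ‖h • (t • w1 + (1 - t) • w2)‖ := by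
      rw [real_inner_smul_right, norm_smul, Real.norm_eq_abs, abs_of_pos hh.1]
      have := (hstrict t ht).1
      nlinarith [hh.1]
    have := hinw _ hnv hiv 1 ⟨zero_le_one, le_refl 1⟩
    simpa using this
  set wl := l • w1 + (1 - l) • w2 with hwl
  have hev : ∀ᶠ h in 𝓝[>] (0:ℝ),
      l * qfun u x h w1 + (1 - l) * qfun u x h w2 - qfun u x h wl
        ≤ l * (1 - l) * ‖w1 - w2‖ * ω (h * ‖w1 - w2‖) := by
    filter_upwards [Ioo_mem_nhdsGT_of_mem ⟨le_refl (0:ℝ), div_pos hδ hM0⟩] with h hh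
    have hX1 : x + h • w1 ∈ closure Ω := by
      have := hsegmem h hh 1 ⟨zero_le_one, le_refl 1⟩
      simpa using this
    have hX2 : x + h • w2 ∈ closure Ω := by
      have := hsegmem h hh 0 ⟨le_refl 0, zero_le_one⟩
      simpa using this
    have hseg' : segment ℝ (x + h • w1) (x + h • w2) ⊆ closure Ω := by
      rw [segment_eq_image']
      rintro z ⟨t, ht, rfl⟩
      have he : x + h • w1 + t • (x + h • w2 - (x + h • w1))
          = x + h • ((1 - t) • w1 + (1 - (1 - t)) • w2) := by
        simp only [sub_sub_cancel]
        module
      show x + h • w1 + t • (x + h • w2 - (x + h • w1)) ∈ closure Ω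
      rw [he]
      exact hsegmem h hh (1 - t) ⟨by linarith [ht.2], by linarith [ht.1]⟩
    have key := hu _ hX1 _ hX2 hseg' l ⟨le_of_lt h0, le_of_lt h1⟩
    have hc1 : l • (x + h • w1) + (1 - l) • (x + h • w2) = x + h • wl := by
      rw [hwl]; module
    have hc2 : ‖(x + h • w1) - (x + h • w2)‖ = h * ‖w1 - w2‖ := by
      have e : (x + h • w1) - (x + h • w2) = h • (w1 - w2) := by module
      rw [e, norm_smul, Real.norm_eq_abs, abs_of_pos hh.1]
    rw [hc1, hc2] at key
    have e3 : l * qfun u x h w1 + (1 - l) * qfun u x h w2 - qfun u x h wl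
        = (l * u (x + h • w1) + (1 - l) * u (x + h • w2) - u (x + h • wl)) / h := by
      rw [qfun, qfun, qfun]
      field_simp
      ring
    rw [e3, div_le_iff₀ hh.1]
    calc l * u (x + h • w1) + (1 - l) * u (x + h • w2) - u (x + h • wl)
        ≤ l * (1 - l) * (h * ‖w1 - w2‖) * ω (h * ‖w1 - w2‖) := key
      _ = l * (1 - l) * ‖w1 - w2‖ * ω (h * ‖w1 - w2‖) * h := by ring
  by_cases hw12 : w1 = w2
  · have hwleq : wl = w1 := by rw [hwl, hw12]; module
    rw [hwleq, hw12]
    exact le_of_eq (by ring)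
  · have hw12n : 0 < ‖w1 - w2‖ := by
      rw [norm_pos_iff]; exact sub_ne_zero.2 hw12
    have T1 := phi_tendsto hΩo hK hω hu hρ hb2 hx ha1 hw1 h10
    have T2 := phi_tendsto hΩo hK hω hu hρ hb2 hx ha2 hw2 h20
    obtain ⟨hil, hnzl⟩ := hstrict l hl
    have Tl := phi_tendsto hΩo hK hω hu hρ hb2 hx (div_pos hm0 hM0) hil hnzl
    have TF : Filter.Tendsto
        (fun h => l * qfun u x h w1 + (1 - l) * qfun u x h w2 - qfun u x h wl)
        (𝓝[>] (0:ℝ))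
        (𝓝 (l * phiFun u x w1 + (1 - l) * phiFun u x w2 - phiFun u x wl)) :=
      ((T1.const_mul l).add (T2.const_mul (1 - l))).sub Tl
    have TG : Filter.Tendsto (fun h => l * (1 - l) * ‖w1 - w2‖ * ω (h * ‖w1 - w2‖))
        (𝓝[>] (0:ℝ)) (𝓝 0) := by
      have hωt : Filter.Tendsto (fun h => ω (h * ‖w1 - w2‖)) (𝓝[>] (0:ℝ)) (𝓝 0) :=
        (hω.2.2.2).comp (mul_right_tendsto_nhdsWithin_Ioi hw12n)
      have := hωt.const_mul (l * (1 - l) * ‖w1 - w2‖)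
      rw [mul_zero] at this
      exact this
    have := le_of_tendsto_of_tendsto TF TG hev
    linarith

def phibFun {n : ℕ} (Ω : Set (E n)) (u : E n → ℝ) (x : E n) (w : E n) : ℝ :=
  Filter.liminf (fun ε => phiFun u x (w - ε • outerNormal Ω x)) (𝓝[>] (0:ℝ))

section Phib
variable (hν1 : 1 ≤ ‖outerNormal Ω x‖) (hK0 : 0 ≤ K)

include hν1 in
lemma strict_of_halfspace {w : E n} (hw : (inner ℝ (outerNormal Ω x) w : ℝ) ≤ 0)
    {ε : ℝ} (hε : 0 < ε) :
    ∃ a > (0:ℝ), (inner ℝ (outerNormal Ω x) (w - ε • outerNormal Ω x) : ℝ)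
      ≤ -a * ‖w - ε • outerNormal Ω x‖ ∧ w - ε • outerNormal Ω x ≠ 0 := by
  set ν := outerNormal Ω x with hν
  have hnn : 1 ≤ (inner ℝ ν ν : ℝ) := by
    rw [real_inner_self_eq_norm_mul_norm]
    nlinarith
  have hinner : (inner ℝ ν (w - ε • ν) : ℝ) ≤ -ε := by
    rw [inner_sub_right, real_inner_smul_right]
    nlinarith
  have hwz : w - ε • ν ≠ 0 := by
    intro hz
    rw [hz, inner_zero_right] at hinner
    linarith
  have hc : 0 < ‖w - ε • ν‖ := norm_pos_iff.2 hwz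
  refine ⟨ε / ‖w - ε • ν‖, div_pos hε hc, ?_, hwz⟩
  have : -(ε / ‖w - ε • ν‖) * ‖w - ε • ν‖ = -ε := by field_simp
  rw [this]
  exact hinner

include hΩo hK hω hu hρ hb2 hx hν1 hK0 in
lemma phib_tendsto {w : E n} (hw : (inner ℝ (outerNormal Ω x) w : ℝ) ≤ 0) :
    Filter.Tendsto (fun ε => phiFun u x (w - ε • outerNormal Ω x)) (𝓝[>] (0:ℝ))
      (𝓝 (phibFun Ω u x w)) := by
  set ν := outerNormal Ω x with hν
  set g : ℝ → ℝ := fun ε => phiFun u x (w - ε • ν) with hg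
  set L := phibFun Ω u x w with hL
  have hLdef : L = Filter.liminf g (𝓝[>] (0:ℝ)) := rfl
  have glip : ∀ ε ∈ Set.Ioi (0:ℝ), ∀ ε' ∈ Set.Ioi (0:ℝ), |g ε - g ε'| ≤ K * ‖ν‖ * |ε - ε'| := by
    intro ε hε ε' hε'
    obtain ⟨a, ha, hstr, hnz⟩ := strict_of_halfspace hν1 hw hε
    obtain ⟨a', ha', hstr', hnz'⟩ := strict_of_halfspace hν1 hw hε'
    have := phi_sub_abs_le hΩo hK hω hu hρ hb2 hx ha hstr hnz ha' hstr' hnz'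
    have he : (w - ε • ν) - (w - ε' • ν) = (ε' - ε) • ν := by module
    rw [he, norm_smul, Real.norm_eq_abs] at this
    calc |g ε - g ε'| ≤ K * (|ε' - ε| * ‖ν‖) := this
      _ = K * ‖ν‖ * |ε - ε'| := by rw [abs_sub_comm]; ring
  have gbound : ∀ ε ∈ Set.Ioo (0:ℝ) 1, |g ε| ≤ K * (‖w‖ + ‖ν‖) := by
    intro ε hε
    obtain ⟨a, ha, hstr, hnz⟩ := strict_of_halfspace hν1 hw hε.1
    have h1 := phi_abs_le hΩo hK hω hu hρ hb2 hx ha hstr hnz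
    have h2 : ‖w - ε • ν‖ ≤ ‖w‖ + ‖ν‖ := by
      calc ‖w - ε • ν‖ ≤ ‖w‖ + ‖ε • ν‖ := norm_sub_le _ _
        _ = ‖w‖ + ε * ‖ν‖ := by rw [norm_smul, Real.norm_eq_abs, abs_of_pos hε.1]
        _ ≤ ‖w‖ + 1 * ‖ν‖ := by
            have := mul_le_mul_of_nonneg_right (le_of_lt hε.2) (norm_nonneg ν)
            linarith
        _ = ‖w‖ + ‖ν‖ := by ring
    calc |g ε| ≤ K * ‖w - ε • ν‖ := h1
      _ ≤ K * (‖w‖ + ‖ν‖) := mul_le_mul_of_nonneg_left h2 hK0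
  have hbddset : ∀ᶠ ε in 𝓝[>] (0:ℝ), ε ∈ Set.Ioo (0:ℝ) 1 :=
    Ioo_mem_nhdsGT_of_mem ⟨le_refl 0, one_pos⟩
  have hub : ∀ᶠ ε in 𝓝[>] (0:ℝ), g ε ≤ K * (‖w‖ + ‖ν‖) := by
    filter_upwards [hbddset] with ε hε
    exact (abs_le.1 (gbound ε hε)).2
  have hlb : ∀ᶠ ε in 𝓝[>] (0:ℝ), -(K * (‖w‖ + ‖ν‖)) ≤ g ε := by
    filter_upwards [hbddset] with ε hε
    exact (abs_le.1 (gbound ε hε)).1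
  have hcob : Filter.IsCoboundedUnder (· ≥ ·) (𝓝[>] (0:ℝ)) g :=
    Filter.isCoboundedUnder_ge_of_eventually_le _ hub
  have hbdd : Filter.IsBoundedUnder (· ≥ ·) (𝓝[>] (0:ℝ)) g := by
    refine ⟨-(K * (‖w‖ + ‖ν‖)), ?_⟩
    rw [Filter.eventually_map]
    exact hlb
  rw [Metric.tendsto_nhds]
  intro et het
  set e := et / 2 with he
  have he0 : 0 < e := by rw [he]; linarith
  set δ := min 1 (e / (K * ‖ν‖ + 1)) with hδdef
  have hKν : 0 ≤ K * ‖ν‖ := mul_nonneg hK0 (norm_nonneg ν)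
  have hδ0 : 0 < δ := lt_min one_pos (div_pos he0 (by linarith))
  have hfreq : ∃ᶠ ε in 𝓝[>] (0:ℝ), g ε < L + e := by
    apply Filter.frequently_lt_of_liminf_lt hcob
    rw [← hLdef]; linarith
  have hev2 : ∀ᶠ ε in 𝓝[>] (0:ℝ), L - e < g ε := by
    apply Filter.eventually_lt_of_lt_liminf _ hbdd
    rw [← hLdef]; linarith
  obtain ⟨ε₀, hf1, hf2, hf3⟩ :=
    (hfreq.and_eventually (hev2.and (Ioo_mem_nhdsGT_of_mem ⟨le_refl 0, hδ0⟩))).exists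
  filter_upwards [Ioo_mem_nhdsGT_of_mem ⟨le_refl (0:ℝ), hδ0⟩] with ε hε
  rw [Real.dist_eq]
  have hl1 : |g ε - g ε₀| ≤ K * ‖ν‖ * |ε - ε₀| := glip ε hε.1 ε₀ hf3.1
  have hd : |ε - ε₀| ≤ δ := by
    rw [abs_le]
    constructor <;> [linarith [hf3.2, hε.1]; linarith [hε.2, hf3.1]]
  have hl2 : K * ‖ν‖ * |ε - ε₀| ≤ K * ‖ν‖ * δ := mul_le_mul_of_nonneg_left hd hKν
  have hl3 : K * ‖ν‖ * δ < e := by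
    have hδle : δ ≤ e / (K * ‖ν‖ + 1) := min_le_right _ _
    have : K * ‖ν‖ * δ ≤ K * ‖ν‖ * (e / (K * ‖ν‖ + 1)) :=
      mul_le_mul_of_nonneg_left hδle hKν
    have h4 : K * ‖ν‖ * (e / (K * ‖ν‖ + 1)) < e := by
      have hc2 : (0:ℝ) < K * ‖ν‖ + 1 := by linarith
      have hc3 : K * ‖ν‖ / (K * ‖ν‖ + 1) < 1 := (div_lt_one hc2).2 (by linarith)
      calc K * ‖ν‖ * (e / (K * ‖ν‖ + 1)) = (K * ‖ν‖ / (K * ‖ν‖ + 1)) * e := by ring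
        _ < 1 * e := by nlinarith
        _ = e := one_mul e
    linarith
  have habs := abs_sub_abs_le_abs_sub (g ε) (g ε₀)
  have h5 : |g ε - L| ≤ |g ε - g ε₀| + |g ε₀ - L| := by
    have := abs_sub_le (g ε) (g ε₀) L
    exact this
  have h6 : |g ε₀ - L| < e := by
    rw [abs_lt]; constructor <;> [linarith [hf2]; linarith [hf1]]
  calc |g ε - L| ≤ |g ε - g ε₀| + |g ε₀ - L| := h5
    _ < K * ‖ν‖ * δ + e := by
        have := hl1.trans hl2
        linarith
    _ < e + e := by linarith
    _ = et := by rw [he]; ring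
end Phib

section Phib2
variable (hν1 : 1 ≤ ‖outerNormal Ω x‖) (hK0 : 0 ≤ K)

include hΩo hK hω hu hρ hb2 hx hν1 hK0 in
lemma phib_eq_phi {w : E n} {a : ℝ} (ha : 0 < a)
    (hw : (inner ℝ (outerNormal Ω x) w : ℝ) ≤ -a * ‖w‖) (hw0 : w ≠ 0) :
    phibFun Ω u x w = phiFun u x w := by
  set ν := outerNormal Ω x with hν
  have hwH : (inner ℝ ν w : ℝ) ≤ 0 := by
    have : 0 ≤ a * ‖w‖ := mul_nonneg (le_of_lt ha) (norm_nonneg w)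
    linarith
  have hT : Filter.Tendsto (fun ε => phiFun u x (w - ε • ν)) (𝓝[>] (0:ℝ))
      (𝓝 (phiFun u x w)) := by
    rw [Metric.tendsto_nhds]
    intro et het
    have hKν : 0 ≤ K * ‖ν‖ := mul_nonneg hK0 (norm_nonneg ν)
    have hδ0 : 0 < et / (K * ‖ν‖ + 1) := div_pos het (by linarith)
    filter_upwards [Ioo_mem_nhdsGT_of_mem ⟨le_refl (0:ℝ), hδ0⟩] with ε hε
    obtain ⟨a', ha', hstr', hnz'⟩ := strict_of_halfspace hν1 hwH hε.1
    have hlip := phi_sub_abs_le hΩo hK hω hu hρ hb2 hx ha' hstr' hnz' ha hw hw0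
    rw [← hν] at hlip
    have he2 : ‖w - ε • ν - w‖ = ε * ‖ν‖ := by
      have he : w - ε • ν - w = (-ε) • ν := by module
      rw [he, norm_smul, Real.norm_eq_abs, abs_neg, abs_of_pos hε.1]
    rw [he2] at hlip
    rw [Real.dist_eq]
    calc |phiFun u x (w - ε • ν) - phiFun u x w| ≤ K * (ε * ‖ν‖) := hlip
      _ ≤ (K * ‖ν‖ + 1) * ε := by nlinarith [hε.1]
      _ < (K * ‖ν‖ + 1) * (et / (K * ‖ν‖ + 1)) := by
          apply mul_lt_mul_of_pos_left hε.2 (by linarith)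
      _ = et := mul_div_cancel₀ et (by linarith)
  exact hT.liminf_eq

include hΩo hK hω hu hρ hb2 hx hν1 hK0 in
lemma phib_sub_abs_le {w w' : E n} (hw : (inner ℝ (outerNormal Ω x) w : ℝ) ≤ 0)
    (hw' : (inner ℝ (outerNormal Ω x) w' : ℝ) ≤ 0) :
    |phibFun Ω u x w - phibFun Ω u x w'| ≤ K * ‖w - w'‖ := by
  set ν := outerNormal Ω x with hν
  have T := phib_tendsto hΩo hK hω hu hρ hb2 hx hν1 hK0 hw
  have T' := phib_tendsto hΩo hK hω hu hρ hb2 hx hν1 hK0 hw'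
  refine le_of_tendsto (T.sub T').abs ?_
  filter_upwards [self_mem_nhdsWithin] with ε hε
  obtain ⟨a, ha, hstr, hnz⟩ := strict_of_halfspace hν1 hw hε
  obtain ⟨a', ha', hstr', hnz'⟩ := strict_of_halfspace hν1 hw' hε
  have := phi_sub_abs_le hΩo hK hω hu hρ hb2 hx ha hstr hnz ha' hstr' hnz'
  have he : (w - ε • ν) - (w' - ε • ν) = w - w' := by module
  rwa [he] at this

include hΩo hK hω hu hρ hb2 hx hν1 hK0 in
lemma phib_concave {w1 w2 : E n} (hw1 : (inner ℝ (outerNormal Ω x) w1 : ℝ) ≤ 0)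
    (hw2 : (inner ℝ (outerNormal Ω x) w2 : ℝ) ≤ 0) {l : ℝ} (hl : l ∈ Set.Icc (0:ℝ) 1) :
    l * phibFun Ω u x w1 + (1 - l) * phibFun Ω u x w2
      ≤ phibFun Ω u x (l • w1 + (1 - l) • w2) := by
  set ν := outerNormal Ω x with hν
  have hwl : (inner ℝ ν (l • w1 + (1 - l) • w2) : ℝ) ≤ 0 := by
    rw [inner_add_right, real_inner_smul_right, real_inner_smul_right]
    have e1 : l * (inner ℝ ν w1 : ℝ) ≤ 0 := mul_nonpos_of_nonneg_of_nonpos hl.1 hw1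
    have e2 : (1 - l) * (inner ℝ ν w2 : ℝ) ≤ 0 :=
      mul_nonpos_of_nonneg_of_nonpos (by linarith [hl.2]) hw2
    linarith
  have T1 := phib_tendsto hΩo hK hω hu hρ hb2 hx hν1 hK0 hw1
  have T2 := phib_tendsto hΩo hK hω hu hρ hb2 hx hν1 hK0 hw2
  have Tl := phib_tendsto hΩo hK hω hu hρ hb2 hx hν1 hK0 hwl
  have TF := (T1.const_mul l).add (T2.const_mul (1 - l))
  refine le_of_tendsto_of_tendsto TF Tl ?_
  filter_upwards [self_mem_nhdsWithin] with ε hε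
  obtain ⟨a1, ha1, hstr1, hnz1⟩ := strict_of_halfspace hν1 hw1 hε
  obtain ⟨a2, ha2, hstr2, hnz2⟩ := strict_of_halfspace hν1 hw2 hε
  have key := phi_concave hΩo hK hω hu hρ hb2 hx ha1 ha2 hstr1 hnz1 hstr2 hnz2 hl
  have he : l • (w1 - ε • ν) + (1 - l) • (w2 - ε • ν)
      = (l • w1 + (1 - l) • w2) - ε • ν := by module
  rw [he] at key
  exact key

include hΩo hK hω hu hρ hb2 hx hν1 hK0 in
lemma phib_zero : phibFun Ω u x 0 = 0 := by
  set ν := outerNormal Ω x with hν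
  have hν0 : ν ≠ 0 := by
    intro h
    rw [h, norm_zero] at hν1
    linarith
  have hνn : 0 < ‖ν‖ := by linarith
  have hstrν : (inner ℝ ν (-ν) : ℝ) ≤ -‖ν‖ * ‖-ν‖ := by
    rw [inner_neg_right, real_inner_self_eq_norm_mul_norm, norm_neg]
    linarith [mul_self_nonneg ‖ν‖]
  have hT : Filter.Tendsto (fun ε : ℝ => phiFun u x ((0:E n) - ε • ν)) (𝓝[>] (0:ℝ))
      (𝓝 0) := by
    have heq : ∀ᶠ ε in 𝓝[>] (0:ℝ),
        ε * phiFun u x (-ν) = phiFun u x ((0:E n) - ε • ν) := by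
      filter_upwards [self_mem_nhdsWithin] with ε hε
      have := phi_smul hΩo hK hω hu hρ hb2 hx hε hνn hstrν (neg_ne_zero.2 hν0)
      rw [← this]
      congr 1
      module
    have hbase : Filter.Tendsto (fun ε : ℝ => ε * phiFun u x (-ν)) (𝓝[>] (0:ℝ))
        (𝓝 0) := by
      have h1 : Filter.Tendsto (fun ε : ℝ => ε * phiFun u x (-ν)) (𝓝 (0:ℝ))
          (𝓝 (0 * phiFun u x (-ν))) := tendsto_id.mul_const _
      rw [zero_mul] at h1
      exact h1.mono_left nhdsWithin_le_nhds
    exact hbase.congr' heq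
  exact hT.liminf_eq

include hΩo hK hω hu hρ hb2 hx hν1 hK0 in
lemma phib_two {θ : E n} (hθH : (inner ℝ (outerNormal Ω x) θ : ℝ) ≤ 0) :
    phibFun Ω u x ((2:ℝ) • θ) = 2 * phibFun Ω u x θ := by
  set ν := outerNormal Ω x with hν
  have hT : Filter.Tendsto (fun ε : ℝ => phiFun u x ((2:ℝ) • θ - ε • ν)) (𝓝[>] (0:ℝ))
      (𝓝 (2 * phibFun Ω u x θ)) := by
    have hbase := (phib_tendsto hΩo hK hω hu hρ hb2 hx hν1 hK0 hθH).comp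
      (mul_left_tendsto_nhdsWithin_Ioi (by norm_num : (0:ℝ) < 1/2))
    have hbase2 := hbase.const_mul (2:ℝ)
    apply hbase2.congr'
    filter_upwards [self_mem_nhdsWithin] with ε hε
    obtain ⟨a, ha, hstr, hnz⟩ := strict_of_halfspace hν1 hθH (by have := Set.mem_Ioi.1 hε; linarith : (0:ℝ) < 1/2 * ε)
    have hsm := phi_smul hΩo hK hω hu hρ hb2 hx (by norm_num : (0:ℝ) < 2) ha hstr hnz
    show 2 * phiFun u x (θ - (1/2 * ε) • ν) = phiFun u x ((2:ℝ) • θ - ε • ν)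
    rw [← hsm]
    congr 1
    module
  exact hT.liminf_eq
end Phib2

lemma exists_superlinear {n : ℕ} (H : Set (E n)) (hH : Convex ℝ H) (h0 : (0:E n) ∈ H)
    (φb : E n → ℝ) (M : ℝ) (hM : 0 ≤ M)
    (hconc : ∀ w1 ∈ H, ∀ w2 ∈ H, ∀ l ∈ Set.Icc (0:ℝ) 1,
      l * φb w1 + (1 - l) * φb w2 ≤ φb (l • w1 + (1 - l) • w2))
    (hlip : ∀ w ∈ H, ∀ w' ∈ H, |φb w - φb w'| ≤ M * ‖w - w'‖)
    (θ : E n) (hθH : θ ∈ H) (h2θ : (2:ℝ) • θ ∈ H)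
    (hφ0 : φb 0 = 0) (hhom : φb ((2:ℝ) • θ) = 2 * φb θ) :
    ∃ p : E n, (∀ w ∈ H, φb w ≤ (inner ℝ p w : ℝ)) ∧ (inner ℝ p θ : ℝ) = φb θ := by
  classical
  set F : E n → E n → ℝ := fun w v => -φb v + M * ‖w - v‖ with hF
  set ψt : E n → ℝ := fun w => sInf (F w '' H) with hψt
  have hne : ∀ w, (F w '' H).Nonempty := fun w => ⟨F w 0, 0, h0, rfl⟩
  have hlow : ∀ w, ∀ v ∈ H, -(M * ‖w‖) ≤ F w v := by
    intro w v hv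
    have h1 : |φb v - φb 0| ≤ M * ‖v - 0‖ := hlip v hv 0 h0
    rw [hφ0, sub_zero, sub_zero] at h1
    have h2 : φb v ≤ M * ‖v‖ := (abs_le.1 h1).2
    have h3 : ‖v‖ ≤ ‖w - v‖ + ‖w‖ := by
      have h4 := norm_sub_le w (w - v)
      have he : w - (w - v) = v := by module
      rw [he] at h4
      linarith
    have h5 := mul_le_mul_of_nonneg_left h3 hM
    rw [hF]; simp only
    nlinarith
  have hbdd : ∀ w, BddBelow (F w '' H) := by
    intro w
    refine ⟨-(M * ‖w‖), ?_⟩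
    rintro a ⟨v, hv, rfl⟩
    exact hlow w v hv
  have hψt_le : ∀ w ∈ H, ψt w ≤ -φb w := by
    intro w hw
    apply csInf_le (hbdd w)
    refine ⟨w, hw, ?_⟩
    rw [hF]; simp
  have hψt_ge : ∀ w ∈ H, -φb w ≤ ψt w := by
    intro w hw
    apply le_csInf (hne w)
    rintro a ⟨v, hv, rfl⟩
    have h1 : |φb w - φb v| ≤ M * ‖w - v‖ := hlip w hw v hv
    have h2 := (abs_le.1 h1).1
    rw [hF]; simp only
    linarith
  have hψt_eq : ∀ w ∈ H, ψt w = -φb w := fun w hw =>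
    le_antisymm (hψt_le w hw) (hψt_ge w hw)
  have hψt_lip : ∀ w w', ψt w ≤ ψt w' + M * ‖w - w'‖ := by
    intro w w'
    have hmain : ψt w - M * ‖w - w'‖ ≤ ψt w' := by
      apply le_csInf (hne w')
      rintro a ⟨v, hv, rfl⟩
      have h1 : ψt w ≤ F w v := csInf_le (hbdd w) ⟨v, hv, rfl⟩
      have h2 : ‖w - v‖ ≤ ‖w' - v‖ + ‖w - w'‖ := by
        have h4 := norm_add_le (w - w') (w' - v)
        have he : (w - w') + (w' - v) = w - v := by module
        rw [he] at h4
        linarith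
      have h5 := mul_le_mul_of_nonneg_left h2 hM
      rw [hF] at h1 ⊢
      simp only at h1 ⊢
      nlinarith
    linarith
  have habs_lip : ∀ w w', |ψt w - ψt w'| ≤ M * ‖w - w'‖ := by
    intro w w'
    rw [abs_le]
    constructor
    · have := hψt_lip w' w
      rw [norm_sub_rev] at this
      linarith
    · have := hψt_lip w w'
      linarith
  have hcont : Continuous ψt := by
    have hl : LipschitzWith (Real.toNNReal M) ψt := by
      apply LipschitzWith.of_dist_le_mul
      intro w w'
      rw [Real.dist_eq, Real.coe_toNNReal M hM, dist_eq_norm]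
      exact habs_lip w w'
    exact hl.continuous
  have hconv : ∀ w1 w2 : E n, ∀ a b : ℝ, 0 ≤ a → 0 ≤ b → a + b = 1 →
      ψt (a • w1 + b • w2) ≤ a * ψt w1 + b * ψt w2 := by
    intro w1 w2 a b ha hb hab
    apply le_of_forall_pos_le_add
    intro ε hε
    obtain ⟨A1, ⟨v1, hv1, rfl⟩, hA1⟩ := Real.lt_sInf_add_pos (hne w1) hε
    obtain ⟨A2, ⟨v2, hv2, rfl⟩, hA2⟩ := Real.lt_sInf_add_pos (hne w2) hε
    have hvH : a • v1 + b • v2 ∈ H := hH hv1 hv2 ha hb hab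
    have step1 : ψt (a • w1 + b • w2) ≤ F (a • w1 + b • w2) (a • v1 + b • v2) :=
      csInf_le (hbdd _) ⟨_, hvH, rfl⟩
    have hb' : b = 1 - a := by linarith
    have step2 : a * φb v1 + b * φb v2 ≤ φb (a • v1 + b • v2) := by
      rw [hb']
      exact hconc v1 hv1 v2 hv2 a ⟨ha, by linarith⟩
    have step3 : ‖(a • w1 + b • w2) - (a • v1 + b • v2)‖
        ≤ a * ‖w1 - v1‖ + b * ‖w2 - v2‖ := by
      have he : (a • w1 + b • w2) - (a • v1 + b • v2) = a • (w1 - v1) + b • (w2 - v2) := by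
        module
      rw [he]
      calc ‖a • (w1 - v1) + b • (w2 - v2)‖ ≤ ‖a • (w1 - v1)‖ + ‖b • (w2 - v2)‖ :=
            norm_add_le _ _
        _ = a * ‖w1 - v1‖ + b * ‖w2 - v2‖ := by
            rw [norm_smul, norm_smul, Real.norm_eq_abs, Real.norm_eq_abs,
              abs_of_nonneg ha, abs_of_nonneg hb]
    have step4 : F (a • w1 + b • w2) (a • v1 + b • v2)
        ≤ a * F w1 v1 + b * F w2 v2 := by
      have hM3 := mul_le_mul_of_nonneg_left step3 hM
      rw [hF]
      simp only
      nlinarith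
    calc ψt (a • w1 + b • w2) ≤ a * F w1 v1 + b * F w2 v2 := step1.trans step4
      _ ≤ a * (ψt w1 + ε) + b * (ψt w2 + ε) := by
          have e1 := mul_le_mul_of_nonneg_left (le_of_lt hA1) ha
          have e2 := mul_le_mul_of_nonneg_left (le_of_lt hA2) hb
          exact add_le_add e1 e2
      _ = a * ψt w1 + b * ψt w2 + ε := by linear_combination ε * hab
  set S : Set (E n × ℝ) := {q | ψt q.1 < q.2} with hS
  have hSopen : IsOpen S := isOpen_lt (hcont.comp continuous_fst) continuous_snd
  have hSconv : Convex ℝ S := by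
    rintro ⟨w1, t1⟩ h1 ⟨w2, t2⟩ h2 a b ha hb hab
    simp only [hS, Set.mem_setOf_eq] at h1 h2 ⊢
    rcases eq_or_lt_of_le ha with ha0 | ha0
    · have hb1 : b = 1 := by linarith
      simpa [← ha0, hb1] using h2
    rcases eq_or_lt_of_le hb with hb0 | hb0
    · have ha1 : a = 1 := by linarith
      simpa [← hb0, ha1] using h1
    have hcc := hconv w1 w2 a b ha hb hab
    have e1 : a * ψt w1 < a * t1 := mul_lt_mul_of_pos_left h1 ha0
    have e2 : b * ψt w2 < b * t2 := mul_lt_mul_of_pos_left h2 hb0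
    calc ψt (a • w1 + b • w2) ≤ a * ψt w1 + b * ψt w2 := hcc
      _ < a * t1 + b * t2 := by linarith
  have hnotin : ((θ, ψt θ) : E n × ℝ) ∉ S := by simp [hS]
  obtain ⟨f, hf⟩ := geometric_hahn_banach_open_point hSconv hSopen hnotin
  set c := f ((0:E n), (1:ℝ)) with hc
  set L : E n → ℝ := fun w => f (w, (0:ℝ)) with hL
  have hdec : ∀ w : E n, ∀ t : ℝ, f (w, t) = L w + t * c := by
    intro w t
    have he : ((w, t) : E n × ℝ) = (w, (0:ℝ)) + t • ((0:E n), (1:ℝ)) := by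
      simp [Prod.ext_iff]
    rw [he, map_add, f.map_smul]
    simp [hL, hc, smul_eq_mul]
  have hcneg : c < 0 := by
    have h1 : ((θ, ψt θ + 1) : E n × ℝ) ∈ S := by simp [hS]
    have h2 := hf _ h1
    rw [hdec θ (ψt θ + 1), hdec θ (ψt θ)] at h2
    have e : (ψt θ + 1) * c = ψt θ * c + c := by ring
    rw [e] at h2
    linarith
  have hkey : ∀ w : E n, L w + ψt w * c ≤ L θ + ψt θ * c := by
    intro w
    apply le_of_forall_pos_le_add
    intro ε hε
    set s := ε / (-c) with hs
    have hs0 : 0 < s := div_pos hε (by linarith)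
    have h1 : ((w, ψt w + s) : E n × ℝ) ∈ S := by
      simp only [hS, Set.mem_setOf_eq]; linarith
    have h2 := hf _ h1
    rw [hdec w (ψt w + s), hdec θ (ψt θ)] at h2
    have h3 : s * c = -ε := by
      rw [hs, div_mul_eq_mul_div, div_eq_iff (by linarith : -c ≠ 0)]; ring
    have e : (ψt w + s) * c = ψt w * c + s * c := by ring
    rw [e, h3] at h2
    linarith
  set p : E n := (InnerProductSpace.toDual ℝ (E n)).symm
    (c⁻¹ • (f.comp (ContinuousLinearMap.inl ℝ (E n) ℝ))) with hp
  have hpw : ∀ w : E n, (inner ℝ p w : ℝ) = c⁻¹ * L w := by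
    intro w
    rw [hp, InnerProductSpace.toDual_symm_apply]
    simp [hL, ContinuousLinearMap.smul_apply, ContinuousLinearMap.comp_apply,
      ContinuousLinearMap.inl_apply, smul_eq_mul]
  have hineq : ∀ w ∈ H, φb w ≤ φb θ + (inner ℝ p w : ℝ) - (inner ℝ p θ : ℝ) := by
    intro w hw
    have h1 := hkey w
    rw [hψt_eq w hw, hψt_eq θ hθH] at h1
    rw [hpw w, hpw θ]
    have h3 : L w - L θ ≤ (φb w - φb θ) * c := by nlinarith
    have h4 : φb w - φb θ ≤ (L w - L θ) / c := (le_div_iff_of_neg hcneg).2 h3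
    have h5 : c⁻¹ * L w - c⁻¹ * L θ = (L w - L θ) / c := by
      rw [inv_mul_eq_div, inv_mul_eq_div, ← sub_div]
    linarith [h5 ▸ h4]
  have hθeq : (inner ℝ p θ : ℝ) = φb θ := by
    have e0 := hineq 0 h0
    rw [hφ0, inner_zero_right] at e0
    have e2 := hineq _ h2θ
    rw [hhom, real_inner_smul_right] at e2
    linarith
  refine ⟨p, fun w hw => ?_, hθeq⟩
  have := hineq w hw
  rw [hθeq] at this
  linarith

section Claim5
variable (hν1 : 1 ≤ ‖outerNormal Ω x‖) (hK0 : 0 ≤ K)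

set_option maxHeartbeats 2000000 in
include hΩo hK hω hu hρ hb2 hx hν1 hK0 in
lemma p_superdiff {p : E n}
    (hp : ∀ w : E n, (inner ℝ (outerNormal Ω x) w : ℝ) ≤ 0 →
      phibFun Ω u x w ≤ (inner ℝ p w : ℝ)) :
    p ∈ superDiffOn (closure Ω) u x := by
  intro ε hε
  set ν := outerNormal Ω x with hν
  have hνn : 0 < ‖ν‖ := by linarith
  set nh : E n := (‖ν‖^2)⁻¹ • ν with hnh
  have hinν : (inner ℝ ν nh : ℝ) = 1 := by
    rw [hnh, real_inner_smul_right, real_inner_self_eq_norm_mul_norm]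
    field_simp
  have hnhnorm : ‖nh‖ ≤ 1 := by
    rw [hnh, norm_smul, Real.norm_eq_abs, abs_of_pos (by positivity : (0:ℝ) < (‖ν‖^2)⁻¹)]
    rw [pow_two]
    rw [mul_inv]
    have h1 : ‖ν‖⁻¹ ≤ 1 := by
      rw [inv_le_one_iff₀]; right; exact hν1
    calc ‖ν‖⁻¹ * ‖ν‖⁻¹ * ‖ν‖ = ‖ν‖⁻¹ * (‖ν‖⁻¹ * ‖ν‖) := by ring
      _ = ‖ν‖⁻¹ := by rw [inv_mul_cancel₀ (ne_of_gt hνn), mul_one]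
      _ ≤ 1 := h1
  set C := K + ‖p‖ + 1 with hC
  have hC0 : 0 < C := by have := norm_nonneg p; rw [hC]; linarith
  set s := min (1/2 : ℝ) (ε / (2 * C)) with hs
  have hs0 : 0 < s := lt_min (by norm_num) (div_pos hε (by linarith))
  have hs12 : s ≤ 1/2 := min_le_left _ _
  have hsC : s * C ≤ ε / 2 := by
    have h1 : s ≤ ε / (2 * C) := min_le_right _ _
    calc s * C ≤ (ε / (2 * C)) * C := mul_le_mul_of_nonneg_right h1 (le_of_lt hC0)
      _ = ε / 2 := by field_simp
  -- δ for the inner-product estimate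
  obtain ⟨δ1, hδ1, happ⟩ := oriDist_approx hΩo hρ hb2 hx (s/2) (by linarith)
  -- δ for segment membership of strictly inward vectors with parameter s/4
  obtain ⟨δ2, hδ2, hinw⟩ := inward_segment_mem hΩo hρ hb2 hx (s/4) (by linarith)
  -- δ for the modulus
  obtain ⟨δ3, hδ3, hωb⟩ : ∃ δ3 > (0:ℝ), ∀ r ∈ Set.Ioo (0:ℝ) δ3, ω r < ε / 4 := by
    have h1 : ∀ᶠ r in 𝓝[>] (0:ℝ), ω r < ε / 4 := by
      have h2 := hω.2.2.2
      have h3 := h2.eventually_lt_const (by linarith : (0:ℝ) < ε/4)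
      exact h3
    obtain ⟨δ3, hδ3, hsub⟩ := mem_nhdsGT_iff_exists_Ioo_subset.1 h1
    exact ⟨δ3, by simpa using hδ3, fun r hr => hsub hr⟩
  refine ⟨min δ1 (min (δ2/2) (δ3/4)), by positivity, fun y hy hyd => ?_⟩
  rcases eq_or_ne y x with rfl | hyx
  · simp
  set v := y - x with hv
  have hv0 : v ≠ 0 := sub_ne_zero.2 hyx
  have hvn : 0 < ‖v‖ := norm_pos_iff.2 hv0
  have hvδ1 : ‖v‖ < δ1 := lt_of_lt_of_le hyd (min_le_left _ _)
  have hvδ2 : ‖v‖ < δ2/2 := lt_of_lt_of_le hyd ((min_le_right _ _).trans (min_le_left _ _))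
  have hvδ3 : ‖v‖ < δ3/4 := lt_of_lt_of_le hyd ((min_le_right _ _).trans (min_le_right _ _))
  -- inner product estimate from y ∈ closure Ω
  have hby : oriDist Ω y ≤ 0 := oriDist_nonpos_of_mem_closure hy
  have hinv : (inner ℝ ν v : ℝ) ≤ (s/2) * ‖v‖ := by
    have h1 := happ v hvδ1
    have h2 := (abs_le.1 h1).1
    have h3 : x + v = y := by rw [hv]; abel
    rw [h3] at h2
    linarith
  set vs := v - (s * ‖v‖) • nh with hvs
  have hvsnorm_le : ‖vs‖ ≤ 2 * ‖v‖ := by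
    calc ‖vs‖ ≤ ‖v‖ + ‖(s * ‖v‖) • nh‖ := norm_sub_le _ _
      _ = ‖v‖ + s * ‖v‖ * ‖nh‖ := by
          rw [norm_smul, Real.norm_eq_abs, abs_of_pos (mul_pos hs0 hvn)]
      _ ≤ ‖v‖ + s * ‖v‖ * 1 := by
          have := mul_le_mul_of_nonneg_left hnhnorm (le_of_lt (mul_pos hs0 hvn))
          linarith
      _ ≤ 2 * ‖v‖ := by
          have h9 : s * ‖v‖ ≤ 1 * ‖v‖ :=
            mul_le_mul_of_nonneg_right (by linarith : s ≤ 1) (norm_nonneg v)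
          linarith
  have hvv : ‖v - vs‖ ≤ s * ‖v‖ := by
    have he : v - vs = (s * ‖v‖) • nh := by rw [hvs]; module
    rw [he, norm_smul, Real.norm_eq_abs, abs_of_pos (mul_pos hs0 hvn)]
    calc s * ‖v‖ * ‖nh‖ ≤ s * ‖v‖ * 1 :=
          mul_le_mul_of_nonneg_left hnhnorm (le_of_lt (mul_pos hs0 hvn))
      _ = s * ‖v‖ := mul_one _
  have hivs : (inner ℝ ν vs : ℝ) ≤ -(s/2) * ‖v‖ := by
    rw [hvs, inner_sub_right, real_inner_smul_right, hinν]
    linarith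
  have hvs0 : vs ≠ 0 := by
    intro h
    rw [h, inner_zero_right] at hivs
    nlinarith
  have hvsn : 0 < ‖vs‖ := norm_pos_iff.2 hvs0
  have hstr : (inner ℝ ν vs : ℝ) ≤ -(s/4) * ‖vs‖ := by
    have h9 := mul_le_mul_of_nonneg_left hvsnorm_le (by linarith : (0:ℝ) ≤ s/4)
    have h10 : s / 4 * (2 * ‖v‖) = (s/2) * ‖v‖ := by ring
    rw [h10] at h9
    linarith
  -- membership of the inward segment
  have hseg : ∀ t ∈ Set.Icc (0:ℝ) 1, x + (t * 1) • vs ∈ closure Ω := by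
    intro t ht
    have h1 := hinw vs (by linarith : ‖vs‖ < δ2) hstr t ht
    simpa using h1
  have hxvs : x + vs ∈ closure Ω := by
    have := hseg 1 ⟨zero_le_one, le_refl 1⟩
    simpa using this
  -- Lipschitz comparison
  have hterm1 : u y - u (x + vs) ≤ K * (s * ‖v‖) := by
    have h1 := hK y hy (x + vs) hxvs
    have h2 : y - (x + vs) = v - vs := by rw [hv]; abel
    have h3 : ‖y - (x + vs)‖ ≤ s * ‖v‖ := by rw [h2]; exact hvv
    have h4 := (abs_le.1 h1).2
    calc u y - u (x + vs) ≤ K * ‖y - (x + vs)‖ := h4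
      _ ≤ K * (s * ‖v‖) := mul_le_mul_of_nonneg_left h3 hK0
  -- semiconcavity comparison along the segment
  have hterm2 : u (x + vs) - u x ≤ phiFun u x vs + ‖vs‖ * ω ‖vs‖ := by
    have h1 := qfun_le_phi hΩo hK hω hu hρ hb2 hx one_pos hseg
    simp only [qfun, one_smul, div_one, one_mul] at h1
    exact h1
  -- φ(vs) = φ̄(vs) ≤ ⟪p, vs⟫
  have hφvs : phiFun u x vs ≤ (inner ℝ p vs : ℝ) := by
    have h1 := phib_eq_phi hΩo hK hω hu hρ hb2 hx hν1 hK0 (by linarith : (0:ℝ) < s/4) hstr hvs0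
    have h2 := hp vs (by have := mul_pos hs0 hvn; nlinarith : (inner ℝ ν vs : ℝ) ≤ 0)
    rw [h1] at h2
    exact h2
  have hpvs : (inner ℝ p vs : ℝ) ≤ (inner ℝ p v : ℝ) + s * ‖v‖ * ‖p‖ := by
    rw [hvs, inner_sub_right, real_inner_smul_right]
    have h1 : |(inner ℝ p nh : ℝ)| ≤ ‖p‖ * ‖nh‖ := abs_real_inner_le_norm p nh
    have h2 : -(inner ℝ p nh : ℝ) ≤ ‖p‖ := by
      have h3 : ‖p‖ * ‖nh‖ ≤ ‖p‖ * 1 :=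
        mul_le_mul_of_nonneg_left hnhnorm (norm_nonneg p)
      have h4 := (abs_le.1 h1).1
      nlinarith
    nlinarith [mul_le_mul_of_nonneg_left h2 (le_of_lt (mul_pos hs0 hvn))]
  have hωvs : ω ‖vs‖ < ε/4 := by
    apply hωb
    constructor
    · exact hvsn
    · linarith
  have hωnn : 0 ≤ ω ‖vs‖ := hω.1 _ (norm_nonneg vs)
  -- put it all together
  have htotal : u y - u x ≤ (inner ℝ p v : ℝ) + (K * s + s * ‖p‖) * ‖v‖ + ‖vs‖ * ω ‖vs‖ := by
    have hexp : (K * s + s * ‖p‖) * ‖v‖ = K * (s * ‖v‖) + s * ‖v‖ * ‖p‖ := by ring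
    linarith
  have hωfin : ‖vs‖ * ω ‖vs‖ ≤ 2 * ‖v‖ * (ε/4) := by
    calc ‖vs‖ * ω ‖vs‖ ≤ ‖vs‖ * (ε/4) :=
          mul_le_mul_of_nonneg_left (le_of_lt hωvs) (le_of_lt hvsn)
      _ ≤ 2 * ‖v‖ * (ε/4) := mul_le_mul_of_nonneg_right hvsnorm_le (by linarith)
  have hfin : (K * s + s * ‖p‖) * ‖v‖ ≤ (ε/2) * ‖v‖ := by
    have h1 : K * s + s * ‖p‖ ≤ s * C := by
      have h9 : s * C = s * K + s * ‖p‖ + s := by rw [hC]; ring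
      nlinarith
    have h2 : K * s + s * ‖p‖ ≤ ε / 2 := le_trans h1 hsC
    exact mul_le_mul_of_nonneg_right h2 (norm_nonneg v)
  calc u y - u x - (inner ℝ p (y - x) : ℝ) = u y - u x - (inner ℝ p v : ℝ) := by rw [← hv]
    _ ≤ (K * s + s * ‖p‖) * ‖v‖ + ‖vs‖ * ω ‖vs‖ := by linarith
    _ ≤ (ε/2) * ‖v‖ + 2 * ‖v‖ * (ε/4) := by linarith
    _ = ε * ‖v‖ := by ring
    _ = ε * ‖y - x‖ := by rw [← hv]

include hΩo hK hω hu hρ hb2 hx hν1 hK0 in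
lemma superdiff_lower {p' : E n} (hq : p' ∈ superDiffOn (closure Ω) u x)
    {θ : E n} (hθH : (inner ℝ (outerNormal Ω x) θ : ℝ) ≤ 0) :
    phibFun Ω u x θ ≤ (inner ℝ p' θ : ℝ) := by
  set ν := outerNormal Ω x with hν
  have hstep : ∀ ε > (0:ℝ), phiFun u x (θ - ε • ν) ≤ (inner ℝ p' (θ - ε • ν) : ℝ) := by
    intro ε hε
    obtain ⟨a, ha, hstr, hnz⟩ := strict_of_halfspace hν1 hθH hε
    set w := θ - ε • ν with hw
    have hwn : 0 < ‖w‖ := norm_pos_iff.2 hnz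
    apply le_of_forall_pos_le_add
    intro e he
    set e' := e / ‖w‖ with he'
    have he'0 : 0 < e' := div_pos he hwn
    obtain ⟨δ, hδ, hsd⟩ := hq e' he'0
    have T := phi_tendsto hΩo hK hω hu hρ hb2 hx ha hstr hnz
    obtain ⟨h₀, hh₀, hseg⟩ := seg_ev hΩo hρ hb2 hx ha hstr hnz
    have hevle : ∀ᶠ h in 𝓝[>] (0:ℝ), qfun u x h w ≤ (inner ℝ p' w : ℝ) + e := by
      filter_upwards [Ioo_mem_nhdsGT_of_mem
        ⟨le_refl (0:ℝ), lt_min hh₀ (div_pos hδ hwn)⟩] with h hh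
      have hmem : x + h • w ∈ closure Ω := by
        have := hseg h ⟨hh.1, lt_of_lt_of_le hh.2 (min_le_left _ _)⟩ 1 ⟨zero_le_one, le_refl 1⟩
        simpa using this
      have hnorm : ‖(x + h • w) - x‖ < δ := by
        have he1 : (x + h • w) - x = h • w := by abel
        rw [he1, norm_smul, Real.norm_eq_abs, abs_of_pos hh.1]
        have := lt_of_lt_of_le hh.2 (min_le_right _ _)
        exact (lt_div_iff₀ hwn).1 this
      have h1 := hsd (x + h • w) hmem hnorm
      have he1 : (x + h • w) - x = h • w := by abel
      rw [he1, real_inner_smul_right, norm_smul, Real.norm_eq_abs, abs_of_pos hh.1] at h1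
      rw [qfun, div_le_iff₀ hh.1]
      have he2 : e' * (h * ‖w‖) = e * h / ‖w‖ * ‖w‖ := by
        rw [he']; field_simp
      calc u (x + h • w) - u x ≤ h * (inner ℝ p' w : ℝ) + e' * (h * ‖w‖) := by linarith
        _ = ((inner ℝ p' w : ℝ) + e) * h := by rw [he2]; field_simp
    exact le_of_tendsto T hevle
  have T2 := phib_tendsto hΩo hK hω hu hρ hb2 hx hν1 hK0 hθH
  have Tin : Filter.Tendsto (fun ε : ℝ => (inner ℝ p' (θ - ε • ν) : ℝ)) (𝓝[>] (0:ℝ))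
      (𝓝 (inner ℝ p' θ : ℝ)) := by
    have hc : Continuous (fun ε : ℝ => (inner ℝ p' (θ - ε • ν) : ℝ)) := by
      have he : (fun ε : ℝ => (inner ℝ p' (θ - ε • ν) : ℝ))
          = fun ε : ℝ => (inner ℝ p' θ : ℝ) - ε * (inner ℝ p' ν : ℝ) := by
        funext ε
        rw [inner_sub_right, real_inner_smul_right]
      rw [he]
      continuity
    have h1 : Filter.Tendsto (fun ε : ℝ => (inner ℝ p' (θ - ε • ν) : ℝ)) (𝓝 (0:ℝ))
        (𝓝 (inner ℝ p' (θ - (0:ℝ) • ν) : ℝ)) := hc.tendsto 0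
    have he0 : θ - (0:ℝ) • ν = θ := by simp
    rw [he0] at h1
    exact h1.mono_left nhdsWithin_le_nhds
  apply le_of_tendsto_of_tendsto T2 Tin
  filter_upwards [self_mem_nhdsWithin] with ε hε
  exact hstep ε hε
end Claim5

section Final
variable (hν1 : 1 ≤ ‖outerNormal Ω x‖) (hK0 : 0 ≤ K)

include hΩo hρ hb2 hx hν1 in
lemma dini_neBot {θ : E n} (hθH : (inner ℝ (outerNormal Ω x) θ : ℝ) ≤ 0) :
    (diniFilter (closure Ω) x θ).NeBot := by
  set ν := outerNormal Ω x with hν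
  unfold diniFilter
  rw [Filter.inf_principal_neBot_iff]
  intro U hU
  obtain ⟨A, hA, B, hB, hAB⟩ := Filter.mem_prod_iff.1 hU
  obtain ⟨r, hr, hball⟩ := Metric.mem_nhds_iff.1 hB
  set εv := r / (2 * (‖ν‖ + 1)) with hεv
  have hνn : (0:ℝ) < ‖ν‖ + 1 := by have := norm_nonneg ν; linarith
  have hεv0 : 0 < εv := div_pos hr (by linarith)
  set θe := θ - εv • ν with hθe
  have hθeB : θe ∈ B := by
    apply hball
    rw [Metric.mem_ball, dist_eq_norm]
    have he : θe - θ = -(εv • ν) := by rw [hθe]; abel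
    rw [he, norm_neg, norm_smul, Real.norm_eq_abs, abs_of_pos hεv0]
    have h1 : εv * ‖ν‖ < εv * (‖ν‖ + 1) := by nlinarith
    have h2 : εv * (‖ν‖ + 1) = r / 2 := by
      rw [hεv]; field_simp
    linarith
  obtain ⟨a, ha, hstr, hnz⟩ := strict_of_halfspace hν1 hθH hεv0
  obtain ⟨h₀, hh₀, hseg⟩ := seg_ev hΩo hρ hb2 hx ha hstr hnz
  have hmemev : ∀ᶠ h in 𝓝[>] (0:ℝ), x + h • θe ∈ closure Ω := by
    filter_upwards [Ioo_mem_nhdsGT_of_mem ⟨le_refl (0:ℝ), hh₀⟩] with h hh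
    have := hseg h hh 1 ⟨zero_le_one, le_refl 1⟩
    simpa using this
  have hA' : ∀ᶠ h in 𝓝[>] (0:ℝ), h ∈ A := hA
  obtain ⟨h₁, hm1, hm2⟩ := (hmemev.and hA').exists
  exact ⟨(h₁, θe), hAB (Set.mk_mem_prod hm2 hθeB), hm1⟩

set_option maxHeartbeats 1000000 in
include hΩo hK hω hu hρ hb2 hx hν1 hK0 in
lemma dini_tendsto {θ : E n} (hθH : (inner ℝ (outerNormal Ω x) θ : ℝ) ≤ 0)
    {p : E n} (hpD : p ∈ superDiffOn (closure Ω) u x)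
    (hpθ : (inner ℝ p θ : ℝ) = phibFun Ω u x θ) :
    Filter.Tendsto (diffQuot u x) (diniFilter (closure Ω) x θ)
      (𝓝 (phibFun Ω u x θ)) := by
  set ν := outerNormal Ω x with hν
  set mθ := phibFun Ω u x θ with hmθ
  rw [Metric.tendsto_nhds]
  intro ε hε
  have hθn : (0:ℝ) < ‖θ‖ + 1 := by have := norm_nonneg θ; linarith
  have hpn : (0:ℝ) < ‖p‖ + 1 := by have := norm_nonneg p; linarith
  have hKn : (0:ℝ) < K + 1 := by linarith
  have hνn : (0:ℝ) < ‖ν‖ + 1 := by have := norm_nonneg ν; linarith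
  set ε1 := ε / (4 * (‖θ‖ + 1)) with hε1
  have hε10 : 0 < ε1 := div_pos hε (by linarith)
  obtain ⟨δ', hδ', hsd⟩ := hpD ε1 hε10
  set r2 := min 1 (min (ε / (4 * (‖p‖ + 1))) (ε / (8 * (K + 1)))) with hr2
  have hr20 : 0 < r2 :=
    lt_min one_pos (lt_min (div_pos hε (by linarith)) (div_pos hε (by linarith)))
  -- choose εv
  have hT2 := phib_tendsto hΩo hK hω hu hρ hb2 hx hν1 hK0 hθH
  have hev1 : ∀ᶠ εv in 𝓝[>] (0:ℝ),
      dist (phiFun u x (θ - εv • ν)) mθ < ε/8 :=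
    Metric.tendsto_nhds.1 hT2 (ε/8) (by linarith)
  have hb0 : (0:ℝ) < 8 * (K + 1) * (‖ν‖ + 1) := by nlinarith
  have hev2 : ∀ᶠ εv in 𝓝[>] (0:ℝ), εv < ε / (8 * (K + 1) * (‖ν‖ + 1)) := by
    filter_upwards [Ioo_mem_nhdsGT_of_mem
      ⟨le_refl (0:ℝ), div_pos hε hb0⟩] with εv hεv
    exact hεv.2
  obtain ⟨εv, hεv1, hεv2, hεv0⟩ := (hev1.and (hev2.and self_mem_nhdsWithin)).exists
  set θe := θ - εv • ν with hθe
  obtain ⟨a, ha, hstr, hnz⟩ := strict_of_halfspace hν1 hθH hεv0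
  have Tq := phi_tendsto hΩo hK hω hu hρ hb2 hx ha hstr hnz
  have hqev : ∀ᶠ h in 𝓝[>] (0:ℝ),
      dist (qfun u x h θe) (phiFun u x θe) < ε/8 :=
    Metric.tendsto_nhds.1 Tq (ε/8) (by linarith)
  obtain ⟨h₀, hh₀, hseg⟩ := seg_ev hΩo hρ hb2 hx ha hstr hnz
  have hmemev : ∀ᶠ h in 𝓝[>] (0:ℝ), x + h • θe ∈ closure Ω := by
    filter_upwards [Ioo_mem_nhdsGT_of_mem ⟨le_refl (0:ℝ), hh₀⟩] with h hh
    have := hseg h hh 1 ⟨zero_le_one, le_refl 1⟩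
    simpa using this
  -- assemble the eventual statement on pairs
  unfold diniFilter
  rw [Filter.eventually_inf_principal]
  have hHa : ∀ᶠ h in 𝓝[>] (0:ℝ), h ∈ Set.Ioo (0:ℝ) (δ' / (‖θ‖ + 1)) :=
    Ioo_mem_nhdsGT_of_mem ⟨le_refl (0:ℝ), div_pos hδ' hθn⟩
  have hHev := (hHa.and hmemev).and hqev
  have hBev : ∀ᶠ θ' in 𝓝 θ, θ' ∈ Metric.ball θ r2 := Metric.ball_mem_nhds θ hr20
  have hprod := hHev.prod_mk hBev
  apply hprod.mono
  rintro ⟨h, θ'⟩ ⟨⟨⟨hhIoo, hmemθe⟩, hdq⟩, hb⟩ hqS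
  simp only [Set.mem_setOf_eq] at hqS
  have hh : 0 < h := hhIoo.1
  have hbn : ‖θ' - θ‖ < r2 := by
    rw [Metric.mem_ball, dist_eq_norm] at hb
    exact hb
  have hr21 : r2 ≤ 1 := min_le_left _ _
  have hr2p : r2 ≤ ε / (4 * (‖p‖ + 1)) := (min_le_right _ _).trans (min_le_left _ _)
  have hr2K : r2 ≤ ε / (8 * (K + 1)) := (min_le_right _ _).trans (min_le_right _ _)
  show dist (diffQuot u x (h, θ')) mθ < ε
  have hdiq : diffQuot u x (h, θ') = qfun u x h θ' := rfl
  rw [hdiq]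
  -- upper bound
  have hθ'n : ‖θ'‖ ≤ ‖θ‖ + 1 := by
    have h1 : ‖θ'‖ ≤ ‖θ‖ + ‖θ' - θ‖ := by
      have := norm_add_le θ (θ' - θ)
      have he : θ + (θ' - θ) = θ' := by abel
      rw [he] at this
      linarith
    linarith
  have hyd : ‖(x + h • θ') - x‖ < δ' := by
    have he : (x + h • θ') - x = h • θ' := by abel
    rw [he, norm_smul, Real.norm_eq_abs, abs_of_pos hh]
    calc h * ‖θ'‖ ≤ h * (‖θ‖ + 1) := mul_le_mul_of_nonneg_left hθ'n (le_of_lt hh)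
      _ < δ' := (lt_div_iff₀ hθn).1 hhIoo.2
  have hs1 := hsd (x + h • θ') hqS hyd
  have he : (x + h • θ') - x = h • θ' := by abel
  rw [he, real_inner_smul_right, norm_smul, Real.norm_eq_abs, abs_of_pos hh] at hs1
  have hupper : qfun u x h θ' ≤ mθ + ε/2 := by
    have h1 : qfun u x h θ' ≤ (inner ℝ p θ' : ℝ) + ε1 * ‖θ'‖ := by
      rw [qfun, div_le_iff₀ hh]
      calc u (x + h • θ') - u x ≤ h * (inner ℝ p θ' : ℝ) + ε1 * (h * ‖θ'‖) := by linarith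
        _ = ((inner ℝ p θ' : ℝ) + ε1 * ‖θ'‖) * h := by ring
    have h2 : (inner ℝ p θ' : ℝ) ≤ mθ + ‖p‖ * r2 := by
      have h3 : (inner ℝ p θ' : ℝ) = (inner ℝ p θ : ℝ) + (inner ℝ p (θ' - θ) : ℝ) := by
        rw [← inner_add_right]
        congr 1
        abel
      have h4 : (inner ℝ p (θ' - θ) : ℝ) ≤ ‖p‖ * ‖θ' - θ‖ := real_inner_le_norm p _
      have h5 : ‖p‖ * ‖θ' - θ‖ ≤ ‖p‖ * r2 :=
        mul_le_mul_of_nonneg_left (le_of_lt hbn) (norm_nonneg p)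
      rw [h3, hpθ]
      linarith
    have h6 : ‖p‖ * r2 ≤ ε/4 := by
      have h7 : ‖p‖ * r2 ≤ ‖p‖ * (ε / (4 * (‖p‖ + 1))) :=
        mul_le_mul_of_nonneg_left hr2p (norm_nonneg p)
      have h8 : ‖p‖ * (ε / (4 * (‖p‖ + 1))) ≤ ε/4 := by
        have key : (‖p‖ + 1) * (ε / (4 * (‖p‖ + 1))) = ε / 4 := by
          have hne : ‖p‖ + 1 ≠ 0 := by linarith
          field_simp
          try ring
        have ha0 : 0 ≤ ε / (4 * (‖p‖ + 1)) := le_of_lt (div_pos hε (by linarith))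
        have := mul_le_mul_of_nonneg_right (by linarith : ‖p‖ ≤ ‖p‖ + 1) ha0
        linarith
      linarith
    have h9 : ε1 * ‖θ'‖ ≤ ε/4 := by
      have h10 : ε1 * ‖θ'‖ ≤ ε1 * (‖θ‖ + 1) := mul_le_mul_of_nonneg_left hθ'n (le_of_lt hε10)
      have h11 : ε1 * (‖θ‖ + 1) = ε/4 := by
        rw [hε1]; field_simp
      linarith
    linarith
  -- lower bound
  have hsub := qfun_sub_abs_le hK hh hqS hmemθe
  have hθ'e : ‖θ' - θe‖ ≤ r2 + εv * ‖ν‖ := by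
    have he2 : θ' - θe = (θ' - θ) + εv • ν := by rw [hθe]; abel
    calc ‖θ' - θe‖ ≤ ‖θ' - θ‖ + ‖εv • ν‖ := by rw [he2]; exact norm_add_le _ _
      _ = ‖θ' - θ‖ + εv * ‖ν‖ := by
          rw [norm_smul, Real.norm_eq_abs, abs_of_pos hεv0]
      _ ≤ r2 + εv * ‖ν‖ := by linarith
  have hKr2 : K * r2 ≤ ε/8 := by
    have h7 : K * r2 ≤ K * (ε / (8 * (K + 1))) := mul_le_mul_of_nonneg_left hr2K hK0
    have h8 : K * (ε / (8 * (K + 1))) ≤ ε/8 := by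
      have key : (K + 1) * (ε / (8 * (K + 1))) = ε / 8 := by
        have hne : K + 1 ≠ 0 := by linarith
        field_simp
        try ring
      have ha0 : 0 ≤ ε / (8 * (K + 1)) := le_of_lt (div_pos hε (by linarith))
      have := mul_le_mul_of_nonneg_right (by linarith : K ≤ K + 1) ha0
      linarith
    linarith
  have hKεv : K * (εv * ‖ν‖) ≤ ε/8 := by
    have h7 : K * (εv * ‖ν‖) ≤ (K + 1) * (εv * (‖ν‖ + 1)) := by
      have h8 : 0 ≤ εv * ‖ν‖ := mul_nonneg (le_of_lt hεv0) (norm_nonneg ν)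
      nlinarith [norm_nonneg ν, hεv0]
    have h9 : (K + 1) * (εv * (‖ν‖ + 1)) ≤ ε/8 := by
      have h10 : εv ≤ ε / (8 * (K + 1) * (‖ν‖ + 1)) := le_of_lt hεv2
      have h11 := mul_le_mul_of_nonneg_left h10
        (by positivity : (0:ℝ) ≤ (K + 1) * (‖ν‖ + 1))
      have h12 : (K + 1) * (‖ν‖ + 1) * (ε / (8 * (K + 1) * (‖ν‖ + 1))) = ε/8 := by
        field_simp
      calc (K + 1) * (εv * (‖ν‖ + 1)) = (K + 1) * (‖ν‖ + 1) * εv := by ring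
        _ ≤ ε/8 := by rw [← h12]; exact h11
    linarith
  have hKθ'e : K * ‖θ' - θe‖ ≤ ε/4 := by
    have h7 := mul_le_mul_of_nonneg_left hθ'e hK0
    have h8 : K * (r2 + εv * ‖ν‖) = K * r2 + K * (εv * ‖ν‖) := by ring
    rw [h8] at h7
    linarith
  have hdqe : |qfun u x h θe - phiFun u x θe| < ε/8 := by
    rw [Real.dist_eq] at hdq
    exact hdq
  have hφem : |phiFun u x θe - mθ| < ε/8 := by
    rw [Real.dist_eq] at hεv1
    exact hεv1
  have hlower : mθ - ε < qfun u x h θ' := by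
    have h1 := (abs_le.1 hsub).1
    have h2 := (abs_lt.1 hdqe).1
    have h3 := (abs_lt.1 hφem).1
    linarith
  rw [Real.dist_eq, abs_lt]
  constructor
  · linarith
  · linarith
end Final

/-- Lemma 2.1 of the paper: let `u : Ω̄ → ℝ` be Lipschitz and semiconcave
with modulus `ω`, `x ∈ ∂Ω`, `ν(x)` the outward unit normal at `x`.  For every `θ` with
`⟨θ, ν(x)⟩ ≤ 0`, the upper and lower Dini derivatives of `u` at `x` in direction `θ`
coincide and equal `min_{p ∈ D⁺u(x)} ⟨p, θ⟩`; in particular the one-sided directional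
derivative `∂⁺_θ u(x)` exists and equals this minimum. -/
theorem stmt2 {n : ℕ} (Ω : Set (E n)) (hΩo : IsOpen Ω) (hΩne : Ω.Nonempty)
    (hΩb : Bornology.IsBounded Ω) (hΩ2 : HasC2Boundary Ω)
    (u : E n → ℝ) (hLip : ∃ K : NNReal, LipschitzOnWith K u (closure Ω))
    (ω : ℝ → ℝ) (hω : IsModulus ω) (hu : SemiconcaveWith (closure Ω) u ω)
    (x : E n) (hx : x ∈ frontier Ω)
    (θ : E n) (hθ : (inner ℝ θ (outerNormal Ω x) : ℝ) ≤ 0) :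
    ∃ mθ : ℝ,
      IsLeast {r : ℝ | ∃ p ∈ superDiffOn (closure Ω) u x, (inner ℝ p θ : ℝ) = r} mθ ∧
      Filter.limsup (diffQuot u x) (diniFilter (closure Ω) x θ) = mθ ∧
      Filter.liminf (diffQuot u x) (diniFilter (closure Ω) x θ) = mθ ∧
      Filter.Tendsto (diffQuot u x) (diniFilter (closure Ω) x θ) (nhds mθ) := by

  obtain ⟨ρ, hρ, hb2'⟩ := hΩ2
  have hb2 : ContDiffOn ℝ 2 (oriDist Ω) (tube Ω ρ) := hb2'
  obtain ⟨K₀, hK₀⟩ := hLip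
  set K : ℝ := (K₀ : ℝ) with hKdef
  have hK0 : 0 ≤ K := K₀.coe_nonneg
  have hK : ∀ y ∈ closure Ω, ∀ z ∈ closure Ω, |u y - u z| ≤ K * ‖y - z‖ := by
    intro y hy z hz
    have h1 := hK₀.dist_le_mul y hy z hz
    rwa [Real.dist_eq, dist_eq_norm] at h1
  have hν1 : 1 ≤ ‖outerNormal Ω x‖ := norm_outerNormal_ge_one hΩo hρ hb2 hx
  have hθH : (inner ℝ (outerNormal Ω x) θ : ℝ) ≤ 0 := by
    rw [real_inner_comm]; exact hθ
  set ν := outerNormal Ω x with hν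
  set H : Set (E n) := {w | (inner ℝ ν w : ℝ) ≤ 0} with hH
  have hHconv : Convex ℝ H := by
    have hlin : IsLinearMap ℝ (fun w : E n => (inner ℝ ν w : ℝ)) := by
      constructor
      · intro a b; exact inner_add_right ν a b
      · intro c a
        have := real_inner_smul_right ν a c
        simpa using this
    exact convex_halfSpace_le hlin 0
  have h0H : (0:E n) ∈ H := by simp [hH]
  have h2θH : (2:ℝ) • θ ∈ H := by
    simp only [hH, Set.mem_setOf_eq, real_inner_smul_right]
    linarith
  obtain ⟨p, hp1, hp2⟩ := exists_superlinear H hHconv h0H (phibFun Ω u x) K hK0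
    (fun w1 h1 w2 h2 l hl => phib_concave hΩo hK hω hu hρ hb2 hx hν1 hK0 h1 h2 hl)
    (fun w h1 w' h2 => phib_sub_abs_le hΩo hK hω hu hρ hb2 hx hν1 hK0 h1 h2)
    θ hθH h2θH
    (phib_zero hΩo hK hω hu hρ hb2 hx hν1 hK0)
    (phib_two hΩo hK hω hu hρ hb2 hx hν1 hK0 hθH)
  have hpD : p ∈ superDiffOn (closure Ω) u x :=
    p_superdiff hΩo hK hω hu hρ hb2 hx hν1 hK0 (fun w hw => hp1 w hw)
  haveI hNB := dini_neBot hΩo hρ hb2 hx hν1 hθH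
  have hT := dini_tendsto hΩo hK hω hu hρ hb2 hx hν1 hK0 hθH hpD hp2
  refine ⟨phibFun Ω u x θ, ⟨⟨p, hpD, hp2⟩, ?_⟩, hT.limsup_eq, hT.liminf_eq, hT⟩
  rintro r ⟨p', hp', rfl⟩
  exact superdiff_lower hΩo hK hω hu hρ hb2 hx hν1 hK0 hp' hθH
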